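/- arXiv:1903.12445 — 14 statements merged into one kernel-verified Lean document; each statement's English description precedes it below -/
import Mathlib

section
/- Let P be a subset of {2,3,4,...} and let r be a nonnegative real number such that the series ζ_P(r) = ∑_{m ∈ P} m^{-r} converges and ζ_P(r) = 1. Then for every integer n ≥ 1, the number of ordered factorizations H(n,P) satisfies H(n,P) ≤ n^r. -/
/-- `HfacP P n` is the number of ordered factorizations of `n` with all factors in `P`,
i.e. the number of finite sequences `(d_1, …, d_k)` with each `d_i ∈ P` and product `n`.
(For `P ⊆ {2,3,…}` and `n = 1` only the empty sequence qualifies, so `HfacP P 1 = 1`.) -/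
noncomputable def HfacP (P : Set ℕ) (n : ℕ) : ℕ :=
  Nat.card {l : List ℕ // (∀ d ∈ l, d ∈ P) ∧ l.prod = n}

lemma two_pow_len_le {l : List ℕ} (h : ∀ d ∈ l, 2 ≤ d) : 2 ^ l.length ≤ l.prod := by
  induction l with
  | nil => simp
  | cons a t ih =>
    simp only [List.length_cons, List.prod_cons, pow_succ]
    rw [mul_comm (2 ^ t.length) 2]
    exact Nat.mul_le_mul (h a (by simp)) (ih fun d hd => h d (List.mem_cons_of_mem _ hd))

lemma finite_S (P : Set ℕ) (hP : ∀ m ∈ P, 2 ≤ m) (n : ℕ) (hn : 1 ≤ n) :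
    Finite {l : List ℕ // (∀ d ∈ l, d ∈ P) ∧ l.prod = n} := by
  have key : {l : List ℕ | (∀ d ∈ l, d ∈ P) ∧ l.prod = n}.Finite := by
    have hfin : {l : List (Set.Iic n : Set ℕ) | l.length ≤ n}.Finite :=
      haveI : Finite (Set.Iic n : Set ℕ) := Set.finite_Iic n
      List.finite_length_le _ n
    have himg := hfin.image (List.map (Subtype.val))
    refine himg.subset ?_
    rintro l ⟨hmem, hprod⟩
    have hb : ∀ d ∈ l, d ∈ Set.Iic n := by
      intro d hd
      have : d ∣ l.prod := List.dvd_prod hd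
      rw [hprod] at this
      exact Nat.le_of_dvd hn this
    have hlen : l.length ≤ n := by
      have h2 := two_pow_len_le (fun d hd => hP d (hmem d hd))
      rw [hprod] at h2
      calc l.length ≤ 2 ^ l.length := Nat.le_of_lt Nat.lt_two_pow_self
        _ ≤ n := h2
    refine ⟨l.pmap (fun a ha => (⟨a, ha⟩ : (Set.Iic n : Set ℕ))) hb, ?_, ?_⟩
    · simpa using hlen
    · simp [List.map_pmap]
  exact key

lemma HfacP_one (P : Set ℕ) (hP : ∀ m ∈ P, 2 ≤ m) : HfacP P 1 = 1 := by
  have huniq : ∀ l : List ℕ, (∀ d ∈ l, d ∈ P) → l.prod = 1 → l = [] := by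
    intro l hl hprod
    cases l with
    | nil => rfl
    | cons a t =>
      exfalso
      have h2 : 2 ≤ a := hP a (hl a (by simp))
      have : a ∣ (a :: t).prod := List.dvd_prod (by simp)
      rw [hprod] at this
      have := Nat.le_of_dvd one_pos this
      omega
  haveI : Unique {l : List ℕ // (∀ d ∈ l, d ∈ P) ∧ l.prod = 1} :=
    { default := ⟨[], by simp⟩
      uniq := fun ⟨l, hl⟩ => Subtype.ext (huniq l hl.1 hl.2) }
  exact Nat.card_unique

open Classical in
lemma HfacP_rec (P : Set ℕ) (hP : ∀ m ∈ P, 2 ≤ m) (n : ℕ) (hn : 2 ≤ n) :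
    HfacP P n = ∑ m ∈ n.divisors.filter (· ∈ P), HfacP P (n / m) := by
  set F := n.divisors.filter (· ∈ P) with hF
  -- the bijection
  have hn1 : 1 ≤ n := by omega
  let β : F → Type := fun m => {l : List ℕ // (∀ d ∈ l, d ∈ P) ∧ l.prod = n / (m : ℕ)}
  have hmdvd : ∀ m : F, (m : ℕ) ∣ n := fun m =>
    (Nat.mem_divisors.mp (Finset.mem_filter.mp m.2).1).1
  have hmP : ∀ m : F, (m : ℕ) ∈ P := fun m => by
    have := (Finset.mem_filter.mp m.2).2
    simpa using this
  have hmpos : ∀ m : F, 0 < (m : ℕ) := fun m => by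
    have := hP _ (hmP m); omega
  let f : (Σ m : F, β m) → {l : List ℕ // (∀ d ∈ l, d ∈ P) ∧ l.prod = n} := fun x =>
    ⟨(x.1 : ℕ) :: (x.2 : List ℕ),
      fun d hd => by
        rcases List.mem_cons.mp hd with h | h
        · subst h; exact hmP x.1
        · exact x.2.2.1 d h,
      by rw [List.prod_cons, x.2.2.2, Nat.mul_div_cancel' (hmdvd x.1)]⟩
  have hbij : Function.Bijective f := by
    constructor
    · rintro ⟨m, l⟩ ⟨m', l'⟩ h
      have h' : (m : ℕ) :: (l : List ℕ) = (m' : ℕ) :: (l' : List ℕ) :=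
        Subtype.ext_iff.mp h
      obtain ⟨h1, h2⟩ := List.cons.injEq _ _ _ _ ▸ h'
      have hm : m = m' := Subtype.ext h1
      subst hm
      have hl : l = l' := Subtype.ext h2
      rw [hl]
    · rintro ⟨l, hl1, hl2⟩
      cases l with
      | nil => exfalso; simp at hl2; omega
      | cons a t =>
        have haP : a ∈ P := hl1 a (by simp)
        have hadvd : a ∣ n := by
          rw [← hl2]; exact List.dvd_prod (by simp)
        have haF : a ∈ F := by
          rw [hF, Finset.mem_filter, Nat.mem_divisors]
          exact ⟨⟨hadvd, by omega⟩, by simpa using haP⟩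
        have hprod : t.prod = n / a := by
          rw [List.prod_cons] at hl2
          have ha : 0 < a := by have := hP a haP; omega
          rw [← hl2, Nat.mul_div_cancel_left _ ha]
        exact ⟨⟨⟨a, haF⟩, ⟨t, fun d hd => hl1 d (List.mem_cons_of_mem _ hd), hprod⟩⟩, rfl⟩
  have hcard := Nat.card_eq_of_bijective f hbij
  haveI : ∀ m : F, Finite (β m) := fun m =>
    finite_S P hP _ (Nat.one_le_iff_ne_zero.mpr (by
      have := Nat.div_pos (Nat.le_of_dvd (by omega) (hmdvd m)) (hmpos m)
      omega))
  haveI : ∀ m : F, Fintype (β m) := fun m => Fintype.ofFinite _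
  rw [HfacP, ← hcard, Nat.card_eq_fintype_card, Fintype.card_sigma]
  rw [← Finset.sum_attach F (fun m => HfacP P (n / m))]
  apply Finset.sum_congr rfl
  intro m _
  rw [HfacP, Nat.card_eq_fintype_card]

theorem stmt0 (P : Set ℕ) (hP : ∀ m ∈ P, 2 ≤ m) (r : ℝ) (hr : 0 ≤ r)
    (hsum : Summable fun m : P => ((m : ℕ) : ℝ) ^ (-r))
    (hroot : ∑' m : P, ((m : ℕ) : ℝ) ^ (-r) = 1) :
    ∀ n : ℕ, 1 ≤ n → (HfacP P n : ℝ) ≤ (n : ℝ) ^ r := by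
  classical
  intro n
  induction n using Nat.strong_induction_on with
  | _ n ih =>
    intro hn
    rcases Nat.lt_or_ge n 2 with h2 | h2
    · interval_cases n
      simp [HfacP_one P hP]
    · rw [HfacP_rec P hP n h2]
      set F := n.divisors.filter (· ∈ P) with hF
      push_cast
      have step1 : ∀ m ∈ F, (HfacP P (n / m) : ℝ) ≤ ((n / m : ℕ) : ℝ) ^ r := by
        intro m hm
        have hmP : m ∈ P := by have := (Finset.mem_filter.mp hm).2; simpa using this
        have hmdvd : m ∣ n := (Nat.mem_divisors.mp (Finset.mem_filter.mp hm).1).1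
        have hm2 : 2 ≤ m := hP m hmP
        have hlt : n / m < n := Nat.div_lt_self (by omega) (by omega)
        have hge : 1 ≤ n / m := Nat.one_le_div_iff (by omega) |>.mpr (Nat.le_of_dvd (by omega) hmdvd)
        exact ih _ hlt hge
      have step2 : ∀ m ∈ F, ((n / m : ℕ) : ℝ) ^ r = (n : ℝ) ^ r * ((m : ℕ) : ℝ) ^ (-r) := by
        intro m hm
        have hmdvd : m ∣ n := (Nat.mem_divisors.mp (Finset.mem_filter.mp hm).1).1
        have hm2 : 2 ≤ m := hP m (by have := (Finset.mem_filter.mp hm).2; simpa using this)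
        have hmpos : (0:ℝ) < (m:ℝ) := by positivity
        rw [Nat.cast_div_charZero hmdvd, Real.div_rpow (by positivity) (by positivity),
          Real.rpow_neg (by positivity), div_eq_mul_inv]
      calc (∑ m ∈ F, (HfacP P (n / m) : ℝ))
          ≤ ∑ m ∈ F, ((n / m : ℕ) : ℝ) ^ r := Finset.sum_le_sum step1
        _ = ∑ m ∈ F, (n : ℝ) ^ r * ((m : ℕ) : ℝ) ^ (-r) := Finset.sum_congr rfl step2
        _ = (n : ℝ) ^ r * ∑ m ∈ F, ((m : ℕ) : ℝ) ^ (-r) := by rw [Finset.mul_sum]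
        _ ≤ (n : ℝ) ^ r * 1 := by
            apply mul_le_mul_of_nonneg_left _ (by positivity)
            rw [← hroot]
            have hFP : ∀ m ∈ F, m ∈ P := fun m hm => by
              have := (Finset.mem_filter.mp hm).2; simpa using this
            let emb : {x // x ∈ F} ↪ ↥P :=
              ⟨fun x => ⟨x.1, hFP x.1 x.2⟩, fun a b h => by
                apply Subtype.ext
                have := congrArg Subtype.val h
                exact this⟩
            have : (∑ m ∈ F, ((m : ℕ) : ℝ) ^ (-r)) =
                ∑ m ∈ F.attach.map emb, ((m : ℕ) : ℝ) ^ (-r) := by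
              rw [Finset.sum_map]
              exact (Finset.sum_attach F _).symm
            rw [this]
            exact Summable.sum_le_tsum _ (fun m _ => Real.rpow_nonneg (by positivity) _) hsum
        _ = (n : ℝ) ^ r := mul_one _
end

section
/- Let ρ > 1 be the real number satisfying ζ(ρ) = 2, where ζ is the Riemann zeta function (ρ = 1.72865…). Then for every integer n ≥ 2, the number of ordered factorizations H(n) satisfies H(n) ≤ n^ρ. -/
/-- `Hfac n` is the number of ordered factorizations of `n`, i.e. the number of finite
sequences `(d_1, …, d_k)` with each `d_i ≥ 2` and product `n`. -/
noncomputable def Hfac (n : ℕ) : ℕ :=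
  Nat.card {l : List ℕ // (∀ d ∈ l, 2 ≤ d) ∧ l.prod = n}

private abbrev Sfac (n : ℕ) := {l : List ℕ // (∀ d ∈ l, 2 ≤ d) ∧ l.prod = n}

private lemma sfac_bij (n : ℕ) (hn : 2 ≤ n) :
    Function.Bijective (fun p : (Σ d : {d : ℕ // d ∈ n.divisors.filter (fun d => 2 ≤ d)},
        Sfac (n / d.1)) => (⟨p.1.1 :: p.2.1, by
      obtain ⟨⟨d, hd⟩, ⟨l, hl1, hl2⟩⟩ := p
      simp only [Finset.mem_filter, Nat.mem_divisors] at hd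
      refine ⟨?_, ?_⟩
      · intro e he
        rcases List.mem_cons.1 he with h | h
        · exact h ▸ hd.2
        · exact hl1 e h
      · simp only [List.prod_cons, hl2]
        exact Nat.mul_div_cancel' hd.1.1⟩ : Sfac n)) := by
  constructor
  · rintro ⟨⟨d, hd⟩, ⟨l, hl⟩⟩ ⟨⟨d', hd'⟩, ⟨l', hl'⟩⟩ h
    simp only [Subtype.mk.injEq, List.cons.injEq] at h
    obtain ⟨h1, h2⟩ := h
    subst h1
    exact Sigma.ext rfl (heq_of_eq (Subtype.ext h2))
  · rintro ⟨l, hl1, hl2⟩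
    match l with
    | [] => simp at hl2; omega
    | a :: t =>
      have ha : 2 ≤ a := hl1 a (List.mem_cons_self)
      have hprod : a * t.prod = n := by simpa using hl2
      have hdvd : a ∣ n := ⟨t.prod, hprod.symm⟩
      have hmem : a ∈ n.divisors.filter (fun d => 2 ≤ d) := by
        simp only [Finset.mem_filter, Nat.mem_divisors]
        exact ⟨⟨hdvd, by omega⟩, ha⟩
      have ht : t.prod = n / a := by
        rw [← hprod, Nat.mul_div_cancel_left _ (by omega)]
      exact ⟨⟨⟨a, hmem⟩, ⟨t, fun e he => hl1 e (List.mem_cons_of_mem a he), by simpa using ht⟩⟩, rfl⟩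

private lemma sfac_finite : ∀ n : ℕ, Finite (Sfac n) := by
  intro n
  induction n using Nat.strong_induction_on with
  | _ n ih =>
    match n, ih with
    | 0, _ =>
      haveI : IsEmpty (Sfac 0) := by
        refine ⟨fun p => ?_⟩
        obtain ⟨l, hl1, hl2⟩ := p
        have := List.prod_eq_zero_iff.1 hl2
        exact absurd (hl1 0 this) (by omega)
      infer_instance
    | 1, _ =>
      haveI : Subsingleton (Sfac 1) := by
        constructor
        have key : ∀ p : Sfac 1, p.1 = [] := by
          rintro ⟨l, hl1, hl2⟩
          match l with
          | [] => rfl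
          | a :: t =>
            have ha := hl1 a (List.mem_cons_self)
            have hprod : a * t.prod = 1 := by simpa using hl2
            have := Nat.eq_one_of_mul_eq_one_right hprod
            omega
        intro p q
        exact Subtype.ext ((key p).trans (key q).symm)
      infer_instance
    | (m+2), ih =>
      haveI : ∀ d : {d : ℕ // d ∈ (m+2).divisors.filter (fun d => 2 ≤ d)},
          Finite (Sfac ((m+2) / d.1)) := by
        rintro ⟨d, hd⟩
        simp only [Finset.mem_filter, Nat.mem_divisors] at hd
        show Finite (Sfac ((m+2)/d))
        exact ih _ (Nat.div_lt_self (by omega) (by omega))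
      exact Finite.of_surjective _ (sfac_bij (m+2) (by omega)).2

private lemma hfac_one : Hfac 1 = 1 := by
  haveI : Subsingleton (Sfac 1) := by
    constructor
    have key : ∀ p : Sfac 1, p.1 = [] := by
      rintro ⟨l, hl1, hl2⟩
      match l with
      | [] => rfl
      | a :: t =>
        have ha := hl1 a (List.mem_cons_self)
        have hprod : a * t.prod = 1 := by simpa using hl2
        have := Nat.eq_one_of_mul_eq_one_right hprod
        omega
    intro p q
    exact Subtype.ext ((key p).trans (key q).symm)
  have hne : Nonempty (Sfac 1) := ⟨⟨[], by simp⟩⟩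
  rw [Hfac, Nat.card_eq_one_iff_unique]
  exact ⟨inferInstance, hne⟩

private lemma hfac_rec (n : ℕ) (hn : 2 ≤ n) :
    Hfac n = ∑ d ∈ n.divisors.filter (fun d => 2 ≤ d), Hfac (n / d) := by
  classical
  haveI : ∀ m, Finite (Sfac m) := sfac_finite
  haveI : ∀ m, Fintype (Sfac m) := fun m => Fintype.ofFinite _
  have h := Nat.card_eq_of_bijective _ (sfac_bij n hn)
  rw [Hfac, ← h, Nat.card_eq_fintype_card, Fintype.card_sigma,
    ← Finset.sum_coe_sort (n.divisors.filter (fun d => 2 ≤ d)) (fun d => Hfac (n / d))]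
  exact Finset.sum_congr rfl fun a _ => (Nat.card_eq_fintype_card).symm

theorem stmt2 (ρ : ℝ) (hρ : 1 < ρ) (hzeta : ∑' m : ℕ, (m : ℝ) ^ (-ρ) = 2) :
    ∀ n : ℕ, 2 ≤ n → (Hfac n : ℝ) ≤ (n : ℝ) ^ ρ := by
  have hsum : Summable (fun m : ℕ => (m : ℝ) ^ (-ρ)) :=
    Real.summable_nat_rpow.2 (by linarith)
  have hsum1 : Summable (fun m : ℕ => ((m + 1 : ℕ) : ℝ) ^ (-ρ)) :=
    (summable_nat_add_iff (f := fun m : ℕ => (m : ℝ) ^ (-ρ)) 1).2 hsum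
  have hsum2 : Summable (fun m : ℕ => ((m + 2 : ℕ) : ℝ) ^ (-ρ)) :=
    (summable_nat_add_iff (f := fun m : ℕ => (m : ℝ) ^ (-ρ)) 2).2 hsum
  have htail : ∑' m : ℕ, ((m + 2 : ℕ) : ℝ) ^ (-ρ) = 1 := by
    have h0 := Summable.tsum_eq_zero_add hsum
    have h1 := Summable.tsum_eq_zero_add hsum1
    rw [hzeta] at h0
    simp only [Nat.cast_zero, Nat.cast_one, Real.one_rpow,
      Real.zero_rpow (by linarith : -ρ ≠ 0), zero_add] at h0 h1
    rw [h1] at h0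
    have : ∑' m : ℕ, ((m + 1 + 1 : ℕ) : ℝ) ^ (-ρ) = ∑' m : ℕ, ((m + 2 : ℕ) : ℝ) ^ (-ρ) := by
      exact tsum_congr fun m => by
        push_cast [show ((m:ℝ)+1+1) = ((m:ℝ)+2) from by ring]
        rfl
    rw [this] at h0
    linarith
  have hdiv : ∀ n : ℕ, 2 ≤ n →
      ∑ d ∈ n.divisors.filter (fun d => 2 ≤ d), ((d : ℝ)) ^ (-ρ) ≤ 1 := by
    intro n hn
    set F := n.divisors.filter (fun d => 2 ≤ d) with hF
    have hrw : ∑ d ∈ F, ((d : ℝ)) ^ (-ρ)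
        = ∑ m ∈ F.image (fun d => d - 2), ((m + 2 : ℕ) : ℝ) ^ (-ρ) := by
      have hinj : ∀ x ∈ F, ∀ y ∈ F, x - 2 = y - 2 → x = y := by
        intro x hx y hy h
        simp only [hF, Finset.mem_filter] at hx hy
        omega
      rw [Finset.sum_image hinj]
      apply Finset.sum_congr rfl
      intro d hd
      simp only [hF, Finset.mem_filter] at hd
      have : d - 2 + 2 = d := by omega
      rw [this]
    rw [hrw, ← htail]
    exact Summable.sum_le_tsum _ (fun i _ => Real.rpow_nonneg (by positivity) _) hsum2
  have key : ∀ n : ℕ, 1 ≤ n → (Hfac n : ℝ) ≤ (n : ℝ) ^ ρ := by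
    intro n
    induction n using Nat.strong_induction_on with
    | _ n ih =>
      intro hn1
      rcases eq_or_lt_of_le hn1 with h1 | h2
      · rw [← h1, hfac_one]
        simp
      · have hn2 : 2 ≤ n := h2
        have hn0 : (0:ℝ) ≤ (n:ℝ) := by positivity
        rw [hfac_rec n hn2]
        push_cast
        calc ∑ d ∈ n.divisors.filter (fun d => 2 ≤ d), (Hfac (n / d) : ℝ)
            ≤ ∑ d ∈ n.divisors.filter (fun d => 2 ≤ d), ((n / d : ℕ) : ℝ) ^ ρ := by
              apply Finset.sum_le_sum
              intro d hd
              simp only [Finset.mem_filter, Nat.mem_divisors] at hd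
              obtain ⟨⟨hdvd, hne⟩, h2d⟩ := hd
              exact ih (n / d) (Nat.div_lt_self (by omega) (by omega))
                (Nat.div_pos (Nat.le_of_dvd (by omega) hdvd) (by omega))
          _ = ∑ d ∈ n.divisors.filter (fun d => 2 ≤ d), (n : ℝ) ^ ρ * (d : ℝ) ^ (-ρ) := by
              apply Finset.sum_congr rfl
              intro d hd
              simp only [Finset.mem_filter, Nat.mem_divisors] at hd
              obtain ⟨⟨hdvd, hne⟩, h2d⟩ := hd
              rw [Nat.cast_div hdvd (by positivity), Real.div_rpow hn0 (by positivity),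
                Real.rpow_neg (by positivity), div_eq_mul_inv]
          _ = (n : ℝ) ^ ρ * ∑ d ∈ n.divisors.filter (fun d => 2 ≤ d), (d : ℝ) ^ (-ρ) :=
              (Finset.mul_sum _ _ _).symm
          _ ≤ (n : ℝ) ^ ρ * 1 :=
              mul_le_mul_of_nonneg_left (hdiv n hn2) (Real.rpow_nonneg hn0 _)
          _ = (n : ℝ) ^ ρ := mul_one _
  intro n hn
  exact key n (by omega)
end

section
/- Let s > 1 be a real number. Then for every integer n ≥ 2 and every integer k ≥ 1, the number H_k(n) of ordered factorizations of n into exactly k factors satisfies H_k(n) ≤ (ζ(s) − 1)^{k-1} · n^s / 2^s. -/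
/-- `Hkfac k n` is the number of ordered factorizations of `n` into exactly `k` factors,
each factor being at least `2`. -/
noncomputable def Hkfac (k n : ℕ) : ℕ :=
  Nat.card {l : List ℕ // l.length = k ∧ (∀ d ∈ l, 2 ≤ d) ∧ l.prod = n}

lemma Hk_finite (k n : ℕ) (hn : 1 ≤ n) :
    Finite {l : List ℕ // l.length = k ∧ (∀ d ∈ l, 2 ≤ d) ∧ l.prod = n} := by
  have key : ∀ (x : {l : List ℕ // l.length = k ∧ (∀ d ∈ l, 2 ≤ d) ∧ l.prod = n})
      (i : Fin k), x.1.get (Fin.cast x.2.1.symm i) < n + 1 := by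
    intro x i
    have hmem : x.1.get (Fin.cast x.2.1.symm i) ∈ x.1 := by
      exact List.get_mem _ _
    have hdvd : x.1.get (Fin.cast x.2.1.symm i) ∣ n :=
      (List.dvd_prod hmem).trans (dvd_of_eq x.2.2.2)
    exact Nat.lt_succ_of_le (Nat.le_of_dvd hn hdvd)
  apply Finite.of_injective
    (fun x : {l : List ℕ // l.length = k ∧ (∀ d ∈ l, 2 ≤ d) ∧ l.prod = n} =>
      (fun i : Fin k => (⟨x.1.get (Fin.cast x.2.1.symm i), key x i⟩ : Fin (n+1))))
  intro x y h
  apply Subtype.ext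
  apply List.ext_get (x.2.1.trans y.2.1.symm)
  intro i h1 h2
  have := congrFun h ⟨i, x.2.1 ▸ h1⟩
  simpa [Fin.ext_iff] using this

lemma Hkfac_of_one (k : ℕ) (hk : 1 ≤ k) : Hkfac k 1 = 0 := by
  have : IsEmpty {l : List ℕ // l.length = k ∧ (∀ d ∈ l, 2 ≤ d) ∧ l.prod = 1} := by
    constructor
    rintro ⟨l, hl, h2, hp⟩
    have hne : l ≠ [] := by
      intro h; rw [h] at hl; simp at hl; omega
    have hmem := List.head_mem hne
    have h2' := h2 _ hmem
    have hdvd : l.head hne ∣ 1 := (List.dvd_prod hmem).trans (dvd_of_eq hp)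
    have := Nat.le_of_dvd one_pos hdvd
    omega
  simp [Hkfac, Nat.card_of_isEmpty]

lemma Hkfac_one_fac (n : ℕ) (hn : 2 ≤ n) : Hkfac 1 n = 1 := by
  have : Unique {l : List ℕ // l.length = 1 ∧ (∀ d ∈ l, 2 ≤ d) ∧ l.prod = n} := by
    refine ⟨⟨⟨[n], by simp, ?_, by simp⟩⟩, ?_⟩
    · intro d hd; simp at hd; omega
    · rintro ⟨l, hl, h2, hp⟩
      obtain ⟨a, rfl⟩ := List.length_eq_one_iff.mp hl
      simp at hp
      subst hp
      rfl
  rw [Hkfac, Nat.card_unique]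

lemma Hkfac_rec (k n : ℕ) (hn : 2 ≤ n) :
    Hkfac (k+1) n ≤
      ∑ d ∈ n.divisors.filter (fun d => 2 ≤ d), Hkfac k (n / d) := by
  classical
  set F := n.divisors.filter (fun d => 2 ≤ d) with hF
  have hn0 : n ≠ 0 := by omega
  have hT : ∀ d : F,
      Finite {l : List ℕ // l.length = k ∧ (∀ e ∈ l, 2 ≤ e) ∧ l.prod = n / (d : ℕ)} := by
    intro d
    have hd : (d : ℕ) ∈ n.divisors.filter (fun d => 2 ≤ d) := d.2
    rw [Finset.mem_filter, Nat.mem_divisors] at hd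
    exact Hk_finite k _ (Nat.div_pos (Nat.le_of_dvd (by omega) hd.1.1) (by omega))
  haveI := hT
  -- the decomposition map
  set T : F → Type := fun d =>
    {l : List ℕ // l.length = k ∧ (∀ e ∈ l, 2 ≤ e) ∧ l.prod = n / (d : ℕ)} with hTdef
  have hne : ∀ x : {l : List ℕ // l.length = k + 1 ∧ (∀ d ∈ l, 2 ≤ d) ∧ l.prod = n},
      x.1 ≠ [] := by
    intro x h
    have := x.2.1
    rw [h] at this
    simp at this
  have hheadmem : ∀ x : {l : List ℕ // l.length = k + 1 ∧ (∀ d ∈ l, 2 ≤ d) ∧ l.prod = n},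
      x.1.head (hne x) ∈ F := by
    intro x
    have hmem := List.head_mem (hne x)
    have hdvd : x.1.head (hne x) ∣ n :=
      (List.dvd_prod hmem).trans (dvd_of_eq x.2.2.2)
    show _ ∈ n.divisors.filter (fun d => 2 ≤ d)
    rw [Finset.mem_filter, Nat.mem_divisors]
    exact ⟨⟨hdvd, hn0⟩, x.2.2.1 _ hmem⟩
  have hprodtail : ∀ x : {l : List ℕ // l.length = k + 1 ∧ (∀ d ∈ l, 2 ≤ d) ∧ l.prod = n},
      x.1.tail.prod = n / x.1.head (hne x) := by
    intro x
    have h := List.cons_head_tail (hne x)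
    have hkey : x.1.prod = x.1.head (hne x) * x.1.tail.prod := by
      conv_lhs => rw [← h]
      rw [List.prod_cons]
    have hp : x.1.head (hne x) * x.1.tail.prod = n := by
      rw [← hkey]
      exact x.2.2.2
    have hpos : 0 < x.1.head (hne x) := by
      have := x.2.2.1 _ (List.head_mem (hne x))
      omega
    exact (Nat.div_eq_of_eq_mul_right hpos hp.symm).symm
  set f : {l : List ℕ // l.length = k + 1 ∧ (∀ d ∈ l, 2 ≤ d) ∧ l.prod = n} →
      Σ d : F, T d := fun x =>
    ⟨⟨x.1.head (hne x), hheadmem x⟩,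
      ⟨x.1.tail,
        by rw [List.length_tail, x.2.1]; rfl,
        fun e he => x.2.2.1 e (List.mem_of_mem_tail he),
        hprodtail x⟩⟩ with hfdef
  have hinj : Function.Injective f := by
    intro x y hxy
    have hhead : x.1.head (hne x) = y.1.head (hne y) := by
      have := congrArg (fun p : Σ d : F, T d => (p.1 : ℕ)) hxy
      simpa [hfdef] using this
    have htail : x.1.tail = y.1.tail := by
      have := congrArg (fun p : Σ d : F, T d => (p.2.1 : List ℕ)) hxy
      simpa [hfdef] using this
    apply Subtype.ext
    rw [← List.cons_head_tail (hne x), ← List.cons_head_tail (hne y),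
      hhead, htail]
  haveI : Finite {l : List ℕ // l.length = k + 1 ∧ (∀ d ∈ l, 2 ≤ d) ∧ l.prod = n} :=
    Hk_finite _ _ (by omega)
  haveI : ∀ d : F, Fintype (T d) := fun d => Fintype.ofFinite _
  have hle : Hkfac (k+1) n ≤ Nat.card (Σ d : F, T d) :=
    Nat.card_le_card_of_injective f hinj
  have hcard : Nat.card (Σ d : F, T d) = ∑ d ∈ F, Hkfac k (n / d) := by
    rw [Nat.card_eq_fintype_card, Fintype.card_sigma]
    rw [← Finset.sum_coe_sort F (fun d => Hkfac k (n / d))]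
    refine Finset.sum_congr rfl fun d _ => ?_
    rw [Hkfac, ← Nat.card_eq_fintype_card]
  omega

theorem stmt4 (s : ℝ) (hs : 1 < s) :
    ∀ n : ℕ, 2 ≤ n → ∀ k : ℕ, 1 ≤ k →
      (Hkfac k n : ℝ) ≤
        ((∑' m : ℕ, (m : ℝ) ^ (-s)) - 1) ^ (k - 1) * (n : ℝ) ^ s / (2 : ℝ) ^ s := by
  have hs0 : (0:ℝ) < s := by linarith
  set C : ℝ := (∑' m : ℕ, (m : ℝ) ^ (-s)) - 1 with hCdef
  -- summability facts
  have hfsum : Summable (fun m : ℕ => (m : ℝ) ^ (-s)) :=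
    Real.summable_nat_rpow.mpr (by linarith)
  set g : ℕ → ℝ := fun m => if 2 ≤ m then (m : ℝ) ^ (-s) else 0 with hgdef
  have hgnn : ∀ m, 0 ≤ g m := by
    intro m
    rw [hgdef]
    dsimp only
    split
    · exact Real.rpow_nonneg (Nat.cast_nonneg m) _
    · exact le_rfl
  have hgle : ∀ m, g m ≤ (m : ℝ) ^ (-s) := by
    intro m
    rw [hgdef]
    dsimp only
    split
    · exact le_rfl
    · exact Real.rpow_nonneg (Nat.cast_nonneg m) _
  have hgsum : Summable g := Summable.of_nonneg_of_le hgnn hgle hfsum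
  have hsplit : ∀ m : ℕ, (m : ℝ) ^ (-s) = g m + (if m = 1 then (1:ℝ) else 0) := by
    intro m
    rw [hgdef]
    dsimp only
    rcases Nat.lt_or_ge m 2 with hm | hm
    · interval_cases m
      · simp [Real.zero_rpow (neg_ne_zero.mpr hs0.ne')]
      · simp
    · rw [if_pos hm, if_neg (by omega)]
      ring
  have hC : C = ∑' m, g m := by
    have hind : Summable (fun m : ℕ => if m = 1 then (1:ℝ) else 0) :=
      (hasSum_ite_eq 1 (1:ℝ)).summable
    have h1 : (∑' m : ℕ, (m : ℝ) ^ (-s)) = (∑' m, g m) + 1 := by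
      rw [tsum_congr hsplit, Summable.tsum_add hgsum hind, tsum_ite_eq]
    rw [hCdef, h1]
    ring
  have hC0 : 0 ≤ C := hC ▸ tsum_nonneg hgnn
  have hFsum : ∀ n : ℕ, 2 ≤ n →
      ∑ d ∈ n.divisors.filter (fun d => 2 ≤ d), ((d:ℝ)) ^ (-s) ≤ C := by
    intro n hn
    rw [hC]
    have hcg : ∀ d ∈ n.divisors.filter (fun d => 2 ≤ d), ((d:ℝ)) ^ (-s) = g d := by
      intro d hd
      rw [Finset.mem_filter] at hd
      rw [hgdef]
      dsimp only
      rw [if_pos hd.2]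
    rw [Finset.sum_congr rfl hcg]
    exact Summable.sum_le_tsum _ (fun i _ => hgnn i) hgsum
  have main : ∀ k : ℕ, 1 ≤ k → ∀ n : ℕ, 2 ≤ n →
      (Hkfac k n : ℝ) ≤ C ^ (k - 1) * (n : ℝ) ^ s / (2:ℝ) ^ s := by
    intro k
    induction k with
    | zero => intro h; exact absurd h (by omega)
    | succ k ih =>
      intro _ n hn
      have h2s : (0:ℝ) < (2:ℝ) ^ s := Real.rpow_pos_of_pos (by norm_num) s
      rcases Nat.eq_zero_or_pos k with rfl | hk1
      · rw [show (0:ℕ)+1 = 1 from rfl, Hkfac_one_fac n hn]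
        simp only [Nat.cast_one, Nat.sub_self, pow_zero, one_mul]
        rw [le_div_iff₀ h2s, one_mul]
        exact Real.rpow_le_rpow (by norm_num) (by exact_mod_cast hn) hs0.le
      · set F := n.divisors.filter (fun d => 2 ≤ d) with hF
        have hstep : (Hkfac (k+1) n : ℝ) ≤ ∑ d ∈ F, (Hkfac k (n/d) : ℝ) := by
          have h := Hkfac_rec k n hn
          rw [hF]
          exact_mod_cast h
        have hterm : ∀ d ∈ F,
            (Hkfac k (n/d) : ℝ) ≤ C ^ (k-1) * ((n:ℝ)^s / (2:ℝ)^s) * (d:ℝ)^(-s) := by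
          intro d hd
          rw [hF, Finset.mem_filter, Nat.mem_divisors] at hd
          obtain ⟨⟨hdvd, hn0⟩, hd2⟩ := hd
          have hdpos : 0 < d := by omega
          have hcastdiv : ((n / d : ℕ) : ℝ) = (n:ℝ) / (d:ℝ) :=
            Nat.cast_div hdvd (by exact_mod_cast hdpos.ne')
          have hRHSrw : (((n/d : ℕ)):ℝ)^s = (n:ℝ)^s * (d:ℝ)^(-s) := by
            rw [hcastdiv, Real.div_rpow (Nat.cast_nonneg n) (Nat.cast_nonneg d),
              Real.rpow_neg (Nat.cast_nonneg d), div_eq_mul_inv]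
          rcases Nat.lt_or_ge (n/d) 2 with hnd | hnd
          · have hnd1 : n / d = 1 := by
              have : 1 ≤ n / d := Nat.div_pos (Nat.le_of_dvd (by omega) hdvd) hdpos
              omega
            rw [hnd1, Hkfac_of_one k hk1]
            simp only [Nat.cast_zero]
            have hdnn : (0:ℝ) ≤ (d:ℝ)^(-s) := Real.rpow_nonneg (Nat.cast_nonneg d) _
            exact mul_nonneg (mul_nonneg (pow_nonneg hC0 _) (by positivity)) hdnn
          · calc (Hkfac k (n/d) : ℝ) ≤ C^(k-1) * ((n/d : ℕ):ℝ)^s / (2:ℝ)^s :=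
                ih hk1 _ hnd
              _ = C^(k-1) * ((n:ℝ)^s/(2:ℝ)^s) * (d:ℝ)^(-s) := by
                rw [hRHSrw]; ring
        have hexp : k - 1 + 1 = k + 1 - 1 := by omega
        calc (Hkfac (k+1) n : ℝ) ≤ ∑ d ∈ F, (Hkfac k (n/d):ℝ) := hstep
          _ ≤ ∑ d ∈ F, C^(k-1) * ((n:ℝ)^s/(2:ℝ)^s) * (d:ℝ)^(-s) :=
              Finset.sum_le_sum hterm
          _ = C^(k-1) * ((n:ℝ)^s/(2:ℝ)^s) * ∑ d ∈ F, (d:ℝ)^(-s) := by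
              rw [Finset.mul_sum]
          _ ≤ C^(k-1) * ((n:ℝ)^s/(2:ℝ)^s) * C := by
              apply mul_le_mul_of_nonneg_left (hFsum n hn)
              exact mul_nonneg (pow_nonneg hC0 _) (by positivity)
          _ = C^(k-1+1) * (n:ℝ)^s / (2:ℝ)^s := by rw [pow_succ]; ring
          _ = C^(k+1-1) * (n:ℝ)^s / (2:ℝ)^s := by rw [hexp]
  intro n hn k hk
  exact main k hk n hn
end

section
/- Let s > 1 be a real number. Then for every odd integer n ≥ 3 and every integer k ≥ 1, the number H_k(n) of ordered factorizations of n into exactly k factors satisfies H_k(n) ≤ ((1 − 2^{-s})ζ(s) − 1)^{k-1} · n^s / 3^s. -/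
def Ffac : ℕ → ℕ → Finset (List ℕ)
  | 0, n => if n = 1 then {[]} else ∅
  | (k+1), n =>
      (n.divisors.filter fun d => 2 ≤ d).biUnion fun d => (Ffac k (n/d)).image (d :: ·)

lemma mem_Ffac : ∀ (k n : ℕ) (l : List ℕ), 1 ≤ n →
    (l ∈ Ffac k n ↔ l.length = k ∧ (∀ d ∈ l, 2 ≤ d) ∧ l.prod = n) := by
  intro k
  induction k with
  | zero =>
    intro n l hn
    simp only [Ffac]
    split_ifs with h
    · subst h
      simp only [Finset.mem_singleton]
      constructor
      · rintro rfl; simp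
      · rintro ⟨hl, -, -⟩; exact List.eq_nil_of_length_eq_zero hl
    · simp only [Finset.notMem_empty, false_iff]
      rintro ⟨hl, -, hp⟩
      rw [List.eq_nil_of_length_eq_zero hl] at hp
      simp at hp
      omega
  | succ k ih =>
    intro n l hn
    simp only [Ffac, Finset.mem_biUnion, Finset.mem_image, Finset.mem_filter,
      Nat.mem_divisors]
    constructor
    · rintro ⟨d, ⟨⟨hdvd, hn0⟩, hd2⟩, t, ht, rfl⟩
      have hnd : 1 ≤ n / d := Nat.div_pos (Nat.le_of_dvd (by omega) hdvd) (by omega)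
      obtain ⟨htl, ht2, htp⟩ := (ih (n/d) t hnd).1 ht
      refine ⟨by simp [htl], ?_, ?_⟩
      · intro x hx
        rcases List.mem_cons.1 hx with rfl | hx
        · exact hd2
        · exact ht2 x hx
      · simp [htp, Nat.mul_div_cancel' hdvd]
    · rintro ⟨hl, h2, hp⟩
      obtain ⟨d, t, rfl⟩ : ∃ d t, l = d :: t := by
        cases l with
        | nil => simp at hl
        | cons a t => exact ⟨a, t, rfl⟩
      have hd2 : 2 ≤ d := h2 d (by simp)
      have hdvd : d ∣ n := ⟨t.prod, by simpa using hp.symm⟩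
      have hq : t.prod = n / d := by
        rw [← hp]; simp [Nat.mul_div_cancel_left _ (by omega : 0 < d)]
      refine ⟨d, ⟨⟨hdvd, by omega⟩, hd2⟩, t, ?_, rfl⟩
      refine (ih (n/d) t ?_).2 ⟨by simpa using hl, fun x hx => h2 x (by simp [hx]), hq⟩
      exact Nat.div_pos (Nat.le_of_dvd (by omega) hdvd) (by omega)

lemma Hkfac_eq (k n : ℕ) (hn : 1 ≤ n) :
    Nat.card {l : List ℕ // l.length = k ∧ (∀ d ∈ l, 2 ≤ d) ∧ l.prod = n}
      = (Ffac k n).card := by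
  rw [← Nat.card_eq_finsetCard]
  exact Nat.card_congr (Equiv.subtypeEquivRight fun l => (mem_Ffac k n l hn).symm)

lemma Ffac_card_succ (k n : ℕ) :
    (Ffac (k+1) n).card
      = ∑ d ∈ n.divisors.filter (fun d => 2 ≤ d), (Ffac k (n/d)).card := by
  rw [Ffac, Finset.card_biUnion]
  · exact Finset.sum_congr rfl fun d _ =>
      Finset.card_image_of_injective _ (List.cons_injective)
  · intro a _ b _ hab
    simp only [Finset.disjoint_left, Finset.mem_image]
    rintro l ⟨t, -, rfl⟩ ⟨t', -, h⟩
    exact hab (by injection h.symm)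

lemma Ffac_one (n : ℕ) (hn : 2 ≤ n) : Ffac 1 n = {[n]} := by
  ext l
  rw [mem_Ffac 1 n l (by omega), Finset.mem_singleton]
  constructor
  · rintro ⟨hl, h2, hp⟩
    obtain ⟨d, t, rfl⟩ : ∃ d t, l = d :: t := by
      cases l with
      | nil => simp at hl
      | cons a t => exact ⟨a, t, rfl⟩
    have : t = [] := List.eq_nil_of_length_eq_zero (by simpa using hl)
    subst this
    simp at hp
    simp [hp]
  · rintro rfl
    exact ⟨rfl, by simpa using hn, by simp⟩

lemma Ffac_of_one (k : ℕ) (hk : 1 ≤ k) : Ffac k 1 = ∅ := by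
  ext l
  simp only [Finset.notMem_empty, iff_false]
  rw [mem_Ffac k 1 l le_rfl]
  rintro ⟨hl, h2, hp⟩
  obtain ⟨d, t, rfl⟩ : ∃ d t, l = d :: t := by
    cases l with
    | nil => simp at hl; omega
    | cons a t => exact ⟨a, t, rfl⟩
  have hd2 : 2 ≤ d := h2 d (by simp)
  have : d ∣ 1 := ⟨t.prod, by simpa using hp.symm⟩
  have := Nat.le_of_dvd one_pos this
  omega

lemma summable_rpow_neg {s : ℝ} (hs : 1 < s) :
    Summable (fun m : ℕ => (m : ℝ) ^ (-s)) :=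
  Real.summable_nat_rpow.2 (by linarith)

set_option maxHeartbeats 800000 in
lemma zeta_tail_eq {s : ℝ} (hs : 1 < s) :
    (1 - (2 : ℝ) ^ (-s)) * (∑' m : ℕ, (m : ℝ) ^ (-s)) - 1
      = ∑' j : ℕ, ((2 * j + 3 : ℕ) : ℝ) ^ (-s) := by
  have hsum := summable_rpow_neg hs
  have hodd : Summable (fun j : ℕ => ((2 * j + 1 : ℕ) : ℝ) ^ (-s)) := by
    have := hsum.comp_injective (i := fun j : ℕ => 2 * j + 1) (fun a b h => by dsimp only at h; omega)
    simpa [Function.comp_def] using this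
  have heven : Summable (fun j : ℕ => ((2 * j : ℕ) : ℝ) ^ (-s)) := by
    have := hsum.comp_injective (i := fun j : ℕ => 2 * j) (fun a b h => by dsimp only at h; omega)
    simpa [Function.comp_def] using this
  have hkey := tsum_even_add_odd (f := fun m : ℕ => (m : ℝ) ^ (-s)) heven hodd
  have heq : ∀ j : ℕ, ((2 * j : ℕ) : ℝ) ^ (-s) = (2 : ℝ) ^ (-s) * (j : ℝ) ^ (-s) := by
    intro j
    push_cast
    rw [Real.mul_rpow (by norm_num) (j.cast_nonneg)]
  have heven' : ∑' j : ℕ, ((2 * j : ℕ) : ℝ) ^ (-s)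
      = (2 : ℝ) ^ (-s) * ∑' m : ℕ, (m : ℝ) ^ (-s) := by
    simp_rw [heq]
    exact tsum_mul_left
  have h1 : ∑' j : ℕ, ((2 * j + 1 : ℕ) : ℝ) ^ (-s)
      = (1 - (2 : ℝ) ^ (-s)) * ∑' m : ℕ, (m : ℝ) ^ (-s) := by
    rw [sub_mul, one_mul, ← heven', ← hkey]; ring
  have h2 := Summable.tsum_eq_zero_add hodd
  have h0 : ((2 * 0 + 1 : ℕ) : ℝ) ^ (-s) = 1 := by norm_num
  rw [← h1, h2, h0]
  have : ∀ j : ℕ, ((2 * (j + 1) + 1 : ℕ) : ℝ) ^ (-s) = ((2 * j + 3 : ℕ) : ℝ) ^ (-s) := by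
    intro j; norm_num; ring_nf
  simp_rw [this]
  ring

lemma sum_odd_le {s : ℝ} (hs : 1 < s) (S : Finset ℕ)
    (hS : ∀ d ∈ S, Odd d ∧ 3 ≤ d) :
    ∑ d ∈ S, (d : ℝ) ^ (-s) ≤ ∑' j : ℕ, ((2 * j + 3 : ℕ) : ℝ) ^ (-s) := by
  have hsum : Summable (fun j : ℕ => ((2 * j + 3 : ℕ) : ℝ) ^ (-s)) := by
    have := (summable_rpow_neg hs).comp_injective (i := fun j : ℕ => 2 * j + 3)
      (fun a b h => by dsimp only at h; omega)
    simpa [Function.comp_def] using this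
  have key : ∑ d ∈ S, (d : ℝ) ^ (-s)
      = ∑ j ∈ S.image (fun d => (d - 3) / 2), ((2 * j + 3 : ℕ) : ℝ) ^ (-s) := by
    rw [Finset.sum_image]
    · refine Finset.sum_congr rfl fun d hd => ?_
      obtain ⟨⟨c, hc⟩, hd3⟩ := hS d hd
      congr 1
      norm_cast
      omega
    · intro a ha b hb h
      obtain ⟨⟨c, hc⟩, ha3⟩ := hS a ha
      obtain ⟨⟨c', hc'⟩, hb3⟩ := hS b hb
      dsimp only at h
      omega
  rw [key]
  exact Summable.sum_le_tsum _ (fun j _ => Real.rpow_nonneg (Nat.cast_nonneg _) _) hsum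

lemma tail_nonneg {s : ℝ} : 0 ≤ ∑' j : ℕ, ((2 * j + 3 : ℕ) : ℝ) ^ (-s) :=
  tsum_nonneg fun j => Real.rpow_nonneg (Nat.cast_nonneg _) _

lemma odd_of_dvd_odd {d n : ℕ} (hd : d ∣ n) (hn : Odd n) : Odd d := by
  obtain ⟨c, rfl⟩ := hd
  exact (Nat.odd_mul.1 hn).1

set_option maxHeartbeats 800000 in
lemma key {s : ℝ} (hs : 1 < s) :
    ∀ k, 1 ≤ k → ∀ n : ℕ, 3 ≤ n → Odd n →
      ((Ffac k n).card : ℝ)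
        ≤ (∑' j : ℕ, ((2 * j + 3 : ℕ) : ℝ) ^ (-s)) ^ (k - 1) * (n : ℝ) ^ s / 3 ^ s := by
  have h3s : (0 : ℝ) < 3 ^ s := Real.rpow_pos_of_pos (by norm_num) s
  intro k hk
  induction k, hk using Nat.le_induction with
  | base =>
    intro n hn _
    rw [Ffac_one n (by omega)]
    simp only [Finset.card_singleton, Nat.cast_one, Nat.sub_self, pow_zero, one_mul]
    rw [le_div_iff₀ h3s, one_mul]
    exact Real.rpow_le_rpow (by norm_num) (by exact_mod_cast hn) (by linarith)
  | succ k hk ih =>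
    intro n hn hodd
    set Cb := ∑' j : ℕ, ((2 * j + 3 : ℕ) : ℝ) ^ (-s) with hCb
    have hCb0 : 0 ≤ Cb := tail_nonneg
    have hA0 : 0 ≤ Cb ^ (k - 1) * (n : ℝ) ^ s / 3 ^ s := by positivity
    rw [Ffac_card_succ, Nat.cast_sum]
    set D := n.divisors.filter (fun d => 2 ≤ d) with hD
    have hDfacts : ∀ d ∈ D, d ∣ n ∧ Odd d ∧ 3 ≤ d := by
      intro d hd
      rw [hD, Finset.mem_filter, Nat.mem_divisors] at hd
      obtain ⟨⟨hdvd, -⟩, h2⟩ := hd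
      have hoddd : Odd d := odd_of_dvd_odd hdvd hodd
      obtain ⟨j, hj⟩ := hoddd
      exact ⟨hdvd, ⟨j, hj⟩, by omega⟩
    have step1 : ∑ d ∈ D, ((Ffac k (n / d)).card : ℝ)
        ≤ ∑ d ∈ D, (Cb ^ (k - 1) * (n : ℝ) ^ s / 3 ^ s) * (d : ℝ) ^ (-s) := by
      refine Finset.sum_le_sum fun d hd => ?_
      obtain ⟨hdvd, hoddd, hd3⟩ := hDfacts d hd
      have hdpos : 0 < d := by omega
      have hndpos : 1 ≤ n / d := Nat.div_pos (Nat.le_of_dvd (by omega) hdvd) hdpos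
      by_cases h1 : n / d = 1
      · rw [h1, Ffac_of_one k hk]
        simp only [Finset.card_empty, Nat.cast_zero]
        exact mul_nonneg hA0 (Real.rpow_nonneg (Nat.cast_nonneg _) _)
      · have hnddvd : n / d ∣ n := Nat.div_dvd_of_dvd hdvd
        have hoddnd : Odd (n / d) := odd_of_dvd_odd hnddvd hodd
        obtain ⟨j, hj⟩ := hoddnd
        have hnd3 : 3 ≤ n / d := by omega
        refine (ih (n / d) hnd3 ⟨j, hj⟩).trans (le_of_eq ?_)
        have hcast : ((n / d : ℕ) : ℝ) = (n : ℝ) / (d : ℝ) := by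
          rw [Nat.cast_div hdvd]
          exact_mod_cast hdpos.ne'
        rw [hcast, Real.div_rpow (Nat.cast_nonneg _) (Nat.cast_nonneg _),
          Real.rpow_neg (Nat.cast_nonneg _)]
        ring
    refine step1.trans ?_
    rw [← Finset.mul_sum]
    have step2 : ∑ d ∈ D, (d : ℝ) ^ (-s) ≤ Cb :=
      sum_odd_le hs D fun d hd => (hDfacts d hd).2
    have hCk : Cb ^ (k - 1) * Cb = Cb ^ k := by
      rw [← pow_succ]
      congr 1
      omega
    calc (Cb ^ (k - 1) * (n : ℝ) ^ s / 3 ^ s) * ∑ d ∈ D, (d : ℝ) ^ (-s)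
        ≤ (Cb ^ (k - 1) * (n : ℝ) ^ s / 3 ^ s) * Cb :=
          mul_le_mul_of_nonneg_left step2 hA0
      _ = Cb ^ (k + 1 - 1) * (n : ℝ) ^ s / 3 ^ s := by
          rw [Nat.add_sub_cancel, ← hCk]; ring

theorem stmt5 (s : ℝ) (hs : 1 < s) :
    ∀ n : ℕ, 3 ≤ n → Odd n → ∀ k : ℕ, 1 ≤ k →
      (Hkfac k n : ℝ) ≤
        ((1 - (2 : ℝ) ^ (-s)) * (∑' m : ℕ, (m : ℝ) ^ (-s)) - 1) ^ (k - 1) *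
          (n : ℝ) ^ s / (3 : ℝ) ^ s := by
  intro n hn hodd k hk
  have h1 : 1 ≤ n := by omega
  rw [Hkfac, Hkfac_eq k n h1, zeta_tail_eq hs]
  exact key hs k hk n hn hodd
end

section
/- Let f : ℕ → ℝ be a multiplicative arithmetic function with f(1) = 1, i.e., f(m)f(n) = f(mn) for all coprime m, n ∈ ℕ. Assume there exist C > 0 and γ ∈ ℝ such that |f(n)| ≤ C n^γ for all n ≥ 2. Then for all n ≥ 2, the Dirichlet inverse satisfies |f⁻¹(n)| ≤ (C/(C+1))^{ω(n)} · (C+1)^{Ω(n)} · n^γ. -/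
open Finset

theorem stmt7 (f g : ℕ → ℝ) (hf1 : f 1 = 1)
    (hmult : ∀ m n : ℕ, 0 < m → 0 < n → Nat.Coprime m n → f (m * n) = f m * f n)
    (hginv : ∀ n : ℕ, 0 < n →
      ∑ d ∈ n.divisors, f (n / d) * g d = if n = 1 then 1 else 0)
    (C : ℝ) (hC : 0 < C) (γ : ℝ)
    (hf : ∀ n : ℕ, 2 ≤ n → |f n| ≤ C * (n : ℝ) ^ γ) :
    ∀ n : ℕ, 2 ≤ n →
      |g n| ≤ (C / (C + 1)) ^ n.primeFactors.card *
        (C + 1) ^ n.primeFactorsList.length * (n : ℝ) ^ γ := by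
  have hC1 : (0:ℝ) < C + 1 := by linarith
  have hC1' : (C:ℝ) + 1 ≠ 0 := ne_of_gt hC1
  -- g 1 = 1
  have hg1 : g 1 = 1 := by
    have := hginv 1 one_pos
    simpa [hf1] using this
  -- the multiplicative closure of g on prime powers
  set h : ℕ → ℝ := fun n => n.factorization.prod fun p k => g (p ^ k) with hh
  have hh1 : h 1 = 1 := by simp [hh]
  have hhpp : ∀ p k : ℕ, p.Prime → h (p ^ k) = g (p ^ k) := by
    intro p k hp
    simp only [hh, Nat.Prime.factorization_pow hp]
    rw [Finsupp.prod_single_index]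
    simpa using hg1
  have hhmul : ∀ m n : ℕ, m ≠ 0 → n ≠ 0 → Nat.Coprime m n → h (m * n) = h m * h n := by
    intro m n hm hn hmn
    simp only [hh, Nat.factorization_mul hm hn]
    exact Finsupp.prod_add_index_of_disjoint
      (by simpa using hmn.disjoint_primeFactors) _
  -- package f and h as arithmetic functions
  set F : ArithmeticFunction ℝ := ⟨fun n => if n = 0 then 0 else f n, by simp⟩ with hF
  set H : ArithmeticFunction ℝ := ⟨fun n => if n = 0 then 0 else h n, by simp⟩ with hHdef
  have hFap : ∀ n : ℕ, n ≠ 0 → F n = f n := by intro n hn; simp [hF, hn]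
  have hHap : ∀ n : ℕ, n ≠ 0 → H n = h n := by intro n hn; simp [hHdef, hn]
  have hFm : F.IsMultiplicative := by
    constructor
    · simpa [hFap 1 one_ne_zero] using hf1
    · intro m n hmn
      rcases eq_or_ne m 0 with rfl | hm
      · have : n = 1 := by simpa using hmn
        subst this; simp [hF]
      rcases eq_or_ne n 0 with rfl | hn
      · simp [hF]
      · rw [hFap _ (mul_ne_zero hm hn), hFap _ hm, hFap _ hn]
        exact hmult m n (Nat.pos_of_ne_zero hm) (Nat.pos_of_ne_zero hn) hmn
  have hHm : H.IsMultiplicative := by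
    constructor
    · simpa [hHap 1 one_ne_zero] using hh1
    · intro m n hmn
      rcases eq_or_ne m 0 with rfl | hm
      · have : n = 1 := by simpa using hmn
        subst this; simp [hHdef]
      rcases eq_or_ne n 0 with rfl | hn
      · simp [hHdef]
      · rw [hHap _ (mul_ne_zero hm hn), hHap _ hm, hHap _ hn]
        exact hhmul m n hm hn hmn
  -- the convolution identity for H, on all n
  have hFHap : ∀ n : ℕ, 0 < n → (F * H) n = ∑ d ∈ n.divisors, f (n / d) * h d := by
    intro n hn
    rw [ArithmeticFunction.mul_apply, Nat.sum_divisorsAntidiagonal' (f := fun a b => F a * H b)]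
    refine Finset.sum_congr rfl fun d hd => ?_
    rw [Nat.mem_divisors] at hd
    have hd0 : d ≠ 0 := by rintro rfl; exact hn.ne' (Nat.eq_zero_of_zero_dvd hd.1)
    have hnd0 : n / d ≠ 0 := by
      have := Nat.div_pos (Nat.le_of_dvd hn hd.1) (Nat.pos_of_ne_zero hd0); omega
    rw [hFap _ hnd0, hHap _ hd0]
  have hFH : F * H = 1 := by
    rw [ArithmeticFunction.IsMultiplicative.eq_iff_eq_on_prime_powers _ (hFm.mul hHm) _
      ArithmeticFunction.isMultiplicative_one]
    intro p i hp
    have hpos : 0 < p ^ i := pow_pos hp.pos i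
    rw [hFHap _ hpos]
    have heq : ∑ d ∈ (p ^ i).divisors, f (p ^ i / d) * h d
        = ∑ d ∈ (p ^ i).divisors, f (p ^ i / d) * g d := by
      refine Finset.sum_congr rfl fun d hd => ?_
      obtain ⟨j, hj, rfl⟩ := (Nat.mem_divisors_prime_pow hp i).mp hd
      rw [hhpp p j hp]
    rw [heq, hginv _ hpos]
    simp [ArithmeticFunction.one_apply]
  -- uniqueness: g = h on positive integers
  have hgh : ∀ n : ℕ, 0 < n → g n = h n := by
    intro n
    induction n using Nat.strong_induction_on with
    | _ n ih =>
      intro hn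
      have e1 := hginv n hn
      have e2 : ∑ d ∈ n.divisors, f (n / d) * h d = if n = 1 then 1 else 0 := by
        rw [← hFHap n hn, hFH]
        simp [ArithmeticFunction.one_apply]
      have hmem : n ∈ n.divisors := Nat.mem_divisors_self n hn.ne'
      rw [← Finset.sum_erase_add _ _ hmem, Nat.div_self hn, hf1, one_mul] at e1 e2
      have hrest : ∑ d ∈ n.divisors.erase n, f (n / d) * g d
          = ∑ d ∈ n.divisors.erase n, f (n / d) * h d := by
        refine Finset.sum_congr rfl fun d hd => ?_
        have hdn : d ≠ n := Finset.ne_of_mem_erase hd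
        have hd' := Finset.mem_of_mem_erase hd
        rw [Nat.mem_divisors] at hd'
        have hd0 : 0 < d := Nat.pos_of_ne_zero (by
          rintro rfl; exact hn.ne' (Nat.eq_zero_of_zero_dvd hd'.1))
        have hlt : d < n := lt_of_le_of_ne (Nat.le_of_dvd hn hd'.1) hdn
        rw [ih d hlt hd0]
      linarith
  -- the bound at prime powers
  set D : ℕ → ℝ := fun k => if k = 0 then 1 else C * (C + 1) ^ (k - 1) with hD
  have hDpos : ∀ k, 0 < D k := by
    intro k
    by_cases hk : k = 0 <;> simp only [hD, hk, if_true, if_false, reduceIte] <;> positivity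
  have hDsum : ∀ k, 1 ≤ k → ∑ j ∈ Finset.range k, C * D j = D k := by
    intro k hk
    induction k with
    | zero => omega
    | succ k ih =>
      rw [Finset.sum_range_succ]
      rcases Nat.eq_zero_or_pos k with rfl | hk1
      · simp [hD]
      · rw [ih hk1]
        have hkk : k - 1 + 1 = k := by omega
        simp only [hD, if_neg (by omega : ¬ k = 0), if_neg (by omega : ¬ k + 1 = 0),
          Nat.succ_sub_one]
        have hpow : (C + 1) ^ k = (C + 1) ^ (k - 1) * (C + 1) := by rw [← pow_succ, hkk]
        rw [hpow]
        ring
  have hppb : ∀ p : ℕ, p.Prime → ∀ k : ℕ, |g (p ^ k)| ≤ D k * ((p ^ k : ℕ) : ℝ) ^ γ := by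
    intro p hp k
    induction k using Nat.strong_induction_on with
    | _ k ih =>
      rcases Nat.eq_zero_or_pos k with rfl | hk
      · simp [hg1, hD]
      · have hpos : 0 < p ^ k := pow_pos hp.pos k
        have e := hginv (p ^ k) hpos
        rw [Nat.sum_divisors_prime_pow hp, Finset.sum_range_succ, Nat.div_self hpos, hf1,
          one_mul, if_neg (Nat.one_lt_pow (by omega) hp.one_lt).ne'] at e
        have hgk : g (p ^ k) = - ∑ j ∈ Finset.range k, f (p ^ k / p ^ j) * g (p ^ j) := by
          linarith
        calc |g (p ^ k)| = |∑ j ∈ Finset.range k, f (p ^ k / p ^ j) * g (p ^ j)| := by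
              rw [hgk, abs_neg]
          _ ≤ ∑ j ∈ Finset.range k, |f (p ^ k / p ^ j) * g (p ^ j)| :=
              Finset.abs_sum_le_sum_abs _ _
          _ ≤ ∑ j ∈ Finset.range k, C * D j * ((p ^ k : ℕ) : ℝ) ^ γ := ?_
          _ = D k * ((p ^ k : ℕ) : ℝ) ^ γ := by rw [← Finset.sum_mul, hDsum k hk]
        refine Finset.sum_le_sum fun j hj => ?_
        rw [Finset.mem_range] at hj
        rw [Nat.pow_div hj.le hp.pos, abs_mul]
        have h2 : 2 ≤ p ^ (k - j) := le_trans hp.two_le (Nat.le_self_pow (by omega) p)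
        have hb1 := hf _ h2
        have hb2 := ih j hj
        have hnat : p ^ (k - j) * p ^ j = p ^ k := by rw [← pow_add]; congr 1; omega
        have key : ((p ^ (k - j) : ℕ) : ℝ) ^ γ * ((p ^ j : ℕ) : ℝ) ^ γ
            = ((p ^ k : ℕ) : ℝ) ^ γ := by
          rw [← Real.mul_rpow (by positivity) (by positivity), ← Nat.cast_mul, hnat]
        calc |f (p ^ (k - j))| * |g (p ^ j)|
            ≤ (C * ((p ^ (k - j) : ℕ) : ℝ) ^ γ) * (D j * ((p ^ j : ℕ) : ℝ) ^ γ) := by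
              refine mul_le_mul hb1 hb2 (abs_nonneg _) ?_
              have := (hDpos j).le
              positivity
          _ = C * D j * ((p ^ k : ℕ) : ℝ) ^ γ := by rw [← key]; ring
  -- final assembly
  intro n hn
  have hn0 : n ≠ 0 := by omega
  rw [hgh n (by omega)]
  have habs : |h n| ≤ ∏ p ∈ (Nat.factorization n).support,
      (D (n.factorization p) * ((p ^ n.factorization p : ℕ) : ℝ) ^ γ) := by
    simp only [hh, Finsupp.prod]
    rw [Finset.abs_prod]
    refine Finset.prod_le_prod (fun p _ => abs_nonneg _) fun p hp => ?_
    have hpp : p.Prime := Nat.prime_of_mem_primeFactors (by simpa using hp)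
    exact hppb p hpp _
  have e1 : ((n : ℝ)) ^ γ = ∏ p ∈ (Nat.factorization n).support,
      ((p ^ n.factorization p : ℕ) : ℝ) ^ γ := by
    rw [Nat.multiplicative_factorization (fun m : ℕ => ((m : ℝ)) ^ γ)
      (fun x y _ => by
        push_cast
        exact Real.mul_rpow (by positivity) (by positivity)) (by simp) hn0]
    rfl
  have e2 : (C + 1) ^ n.primeFactorsList.length
      = ∏ p ∈ (Nat.factorization n).support, (C + 1) ^ n.factorization p := by
    have hmul : ∀ x y : ℕ, Nat.Coprime x y →
        (C + 1) ^ (x * y).primeFactorsList.length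
          = (C + 1) ^ x.primeFactorsList.length * (C + 1) ^ y.primeFactorsList.length := by
      intro x y hxy
      rcases eq_or_ne x 0 with rfl | hx
      · have : y = 1 := by simpa using hxy
        subst this; simp
      rcases eq_or_ne y 0 with rfl | hy
      · have : x = 1 := by simpa using hxy
        subst this; simp
      have hlen := ArithmeticFunction.cardFactors_mul hx hy
      simp only [ArithmeticFunction.cardFactors_apply] at hlen
      rw [hlen, pow_add]
    rw [Nat.multiplicative_factorization (fun m : ℕ => (C + 1) ^ m.primeFactorsList.length)
      hmul (by simp) hn0]
    rw [Finsupp.prod]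
    refine Finset.prod_congr rfl fun p hp => ?_
    have hpp : p.Prime := Nat.prime_of_mem_primeFactors (by simpa using hp)
    rw [hpp.primeFactorsList_pow, List.length_replicate]
  have e3 : ∏ p ∈ (Nat.factorization n).support, D (n.factorization p)
      = (C / (C + 1)) ^ (Nat.factorization n).support.card *
        ∏ p ∈ (Nat.factorization n).support, (C + 1) ^ n.factorization p := by
    rw [← Finset.prod_const, ← Finset.prod_mul_distrib]
    refine Finset.prod_congr rfl fun p hp => ?_
    have hk : n.factorization p ≠ 0 := Finsupp.mem_support_iff.mp hp
    simp only [hD, if_neg hk]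
    have hkk : n.factorization p - 1 + 1 = n.factorization p := by omega
    rw [← hkk, pow_succ]
    field_simp
    ring_nf
    rw [Nat.add_sub_cancel_left]
  rw [Finset.prod_mul_distrib, e3, ← e2, ← e1] at habs
  exact habs
end

section
/- Let f : ℕ → ℝ be a multiplicative arithmetic function with f(1) = 1. Assume there exist C > 0 and γ ∈ ℝ such that |f(n)| ≤ C n^γ for all n ≥ 2. Then for all n ≥ 2, the Dirichlet inverse satisfies |f⁻¹(n)| ≤ n^{γ + ln(1+C)/ln 2}. -/
open Finset ArithmeticFunction

/-- The Dirichlet-inverse values at prime powers, defined recursively. -/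
noncomputable def wfun (f : ℕ → ℝ) (p : ℕ) : ℕ → ℝ
  | 0 => 1
  | (k+1) => -∑ j ∈ (Finset.range (k+1)).attach, f (p ^ (k + 1 - j.1)) * wfun f p j.1
  decreasing_by exact Finset.mem_range.mp j.2

lemma wfun_succ (f : ℕ → ℝ) (p k : ℕ) :
    wfun f p (k+1) = -∑ j ∈ Finset.range (k+1), f (p ^ (k + 1 - j)) * wfun f p j := by
  rw [wfun, Finset.sum_attach (Finset.range (k+1)) (fun j => f (p ^ (k + 1 - j)) * wfun f p j)]

lemma wfun_conv (f : ℕ → ℝ) (hf1 : f 1 = 1) (p : ℕ) (i : ℕ) :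
    ∑ j ∈ Finset.range (i+1), f (p ^ (i - j)) * wfun f p j = if i = 0 then 1 else 0 := by
  cases i with
  | zero => simp [wfun, hf1]
  | succ k =>
      rw [Finset.sum_range_succ, if_neg (Nat.succ_ne_zero k)]
      simp only [Nat.sub_self, pow_zero, hf1, one_mul, wfun_succ]
      ring

lemma wfun_bound (f : ℕ → ℝ) (C γ : ℝ) (hC : 0 < C)
    (hf : ∀ n : ℕ, 2 ≤ n → |f n| ≤ C * (n : ℝ) ^ γ) {p : ℕ} (hp : 2 ≤ p) :
    ∀ k : ℕ, |wfun f p k| ≤ ((p : ℝ) ^ k) ^ γ * (1 + C) ^ k := by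
  intro k
  induction k using Nat.strong_induction_on with
  | _ k ih =>
    match k with
    | 0 => simp [wfun]
    | (k+1) =>
      have hppos : (0:ℝ) < (p:ℝ) := by positivity
      rw [wfun_succ, abs_neg]
      calc |∑ j ∈ Finset.range (k+1), f (p ^ (k + 1 - j)) * wfun f p j|
          ≤ ∑ j ∈ Finset.range (k+1), |f (p ^ (k + 1 - j)) * wfun f p j| :=
            Finset.abs_sum_le_sum_abs _ _
        _ ≤ ∑ j ∈ Finset.range (k+1),
              C * ((p : ℝ) ^ (k+1)) ^ γ * (1 + C) ^ j := by
            apply Finset.sum_le_sum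
            intro j hj
            have hjk : j < k + 1 := Finset.mem_range.mp hj
            have hsub : 1 ≤ k + 1 - j := Nat.le_sub_of_add_le (by omega)
            have h2 : 2 ≤ p ^ (k + 1 - j) :=
              le_trans hp (Nat.le_self_pow (by omega) p)
            rw [abs_mul]
            have hb1 : |f (p ^ (k + 1 - j))| ≤ C * ((p:ℝ) ^ (k+1-j)) ^ γ := by
              have := hf _ h2
              rwa [Nat.cast_pow] at this
            have hb2 := ih j hjk
            calc |f (p ^ (k + 1 - j))| * |wfun f p j|
                ≤ (C * ((p:ℝ) ^ (k+1-j)) ^ γ) * (((p : ℝ) ^ j) ^ γ * (1 + C) ^ j) := by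
                  apply mul_le_mul hb1 hb2 (abs_nonneg _)
                  positivity
              _ = C * (((p:ℝ) ^ (k+1-j)) ^ γ * ((p : ℝ) ^ j) ^ γ) * (1 + C) ^ j := by ring
              _ = C * ((p : ℝ) ^ (k+1)) ^ γ * (1 + C) ^ j := by
                  rw [← Real.mul_rpow (by positivity) (by positivity), ← pow_add,
                    Nat.sub_add_cancel (by omega)]
        _ = C * ((p : ℝ) ^ (k+1)) ^ γ * ∑ j ∈ Finset.range (k+1), (1 + C) ^ j := by
            rw [Finset.mul_sum]
        _ ≤ ((p : ℝ) ^ (k+1)) ^ γ * (1 + C) ^ (k+1) := by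
            have hne : (1 : ℝ) + C ≠ 1 := by linarith
            rw [geom_sum_eq hne]
            have : C * ((p : ℝ) ^ (k+1)) ^ γ * (((1+C) ^ (k+1) - 1) / ((1+C) - 1))
                = ((p : ℝ) ^ (k+1)) ^ γ * ((1+C) ^ (k+1) - 1) := by
              field_simp
              ring
            rw [this]
            have h1 : (0:ℝ) ≤ ((p : ℝ) ^ (k+1)) ^ γ := by positivity
            nlinarith [h1]

theorem stmt8 (f g : ℕ → ℝ) (hf1 : f 1 = 1)
    (hmult : ∀ m n : ℕ, 0 < m → 0 < n → Nat.Coprime m n → f (m * n) = f m * f n)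
    (hginv : ∀ n : ℕ, 0 < n →
      ∑ d ∈ n.divisors, f (n / d) * g d = if n = 1 then 1 else 0)
    (C : ℝ) (hC : 0 < C) (γ : ℝ)
    (hf : ∀ n : ℕ, 2 ≤ n → |f n| ≤ C * (n : ℝ) ^ γ) :
    ∀ n : ℕ, 2 ≤ n →
      |g n| ≤ (n : ℝ) ^ (γ + Real.log (1 + C) / Real.log 2) := by
  -- Set up arithmetic functions
  set β : ℝ := Real.log (1 + C) / Real.log 2 with hβdef
  have hβlogb : β = Real.logb 2 (1 + C) := rfl
  have hβ0 : 0 ≤ β := by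
    rw [hβlogb]
    exact Real.logb_nonneg one_lt_two (by linarith)
  have h2β : (2:ℝ) ^ β = 1 + C := by
    rw [hβlogb]
    exact Real.rpow_logb (by norm_num) (by norm_num) (by linarith)
  -- F and G as arithmetic functions
  let F : ArithmeticFunction ℝ := ⟨fun n => if n = 0 then 0 else f n, if_pos rfl⟩
  let G : ArithmeticFunction ℝ := ⟨fun n => if n = 0 then 0 else g n, if_pos rfl⟩
  let G' : ArithmeticFunction ℝ :=
    ⟨fun n => if n = 0 then 0 else n.factorization.prod (fun p k => wfun f p k), if_pos rfl⟩
  have hFapp : ∀ n : ℕ, n ≠ 0 → F n = f n := fun n hn => if_neg hn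
  have hGapp : ∀ n : ℕ, n ≠ 0 → G n = g n := fun n hn => if_neg hn
  have hG'app : ∀ n : ℕ, n ≠ 0 → G' n = n.factorization.prod (fun p k => wfun f p k) :=
    fun n hn => if_neg hn
  -- F is multiplicative
  have hF : F.IsMultiplicative := by
    rw [ArithmeticFunction.IsMultiplicative.iff_ne_zero]
    constructor
    · rw [hFapp 1 one_ne_zero]; exact hf1
    · intro m n hm hn hmn
      rw [hFapp _ (Nat.mul_ne_zero hm hn), hFapp _ hm, hFapp _ hn]
      exact hmult m n (Nat.pos_of_ne_zero hm) (Nat.pos_of_ne_zero hn) hmn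
  -- G' is multiplicative
  have hG' : G'.IsMultiplicative := by
    rw [ArithmeticFunction.IsMultiplicative.iff_ne_zero]
    constructor
    · rw [hG'app 1 one_ne_zero]
      simp
    · intro m n hm hn hmn
      rw [hG'app _ (Nat.mul_ne_zero hm hn), hG'app _ hm, hG'app _ hn,
        Nat.factorization_mul hm hn,
        Finsupp.prod_add_index_of_disjoint]
      simpa only [Nat.support_factorization] using hmn.disjoint_primeFactors
  -- G' on prime powers
  have hG'pp : ∀ p k : ℕ, p.Prime → G' (p ^ k) = wfun f p k := by
    intro p k hp
    rw [hG'app _ (pow_ne_zero k hp.pos.ne'), Nat.Prime.factorization_pow (p := p) (k := k) hp]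
    exact Finsupp.prod_single_index (by simp [wfun])
  -- F * G' = 1
  have hFG' : F * G' = 1 := by
    rw [ArithmeticFunction.IsMultiplicative.eq_iff_eq_on_prime_powers _ (hF.mul hG') _
      ArithmeticFunction.isMultiplicative_one]
    intro p i hp
    rw [ArithmeticFunction.mul_apply, Nat.sum_divisorsAntidiagonal' (f := fun a b => F a * G' b),
      Nat.sum_divisors_prime_pow hp]
    have : ∀ x ∈ Finset.range (i+1), F (p ^ i / p ^ x) * G' (p ^ x)
        = f (p ^ (i - x)) * wfun f p x := by
      intro x hx
      have hxi : x ≤ i := Nat.lt_succ_iff.mp (Finset.mem_range.mp hx)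
      rw [Nat.pow_div hxi hp.pos, hFapp _ (pow_ne_zero _ hp.pos.ne'), hG'pp p x hp]
    rw [Finset.sum_congr rfl this, wfun_conv f hf1 p i, ArithmeticFunction.one_apply]
    have hiff : p ^ i = 1 ↔ i = 0 := by
      constructor
      · intro h
        by_contra hi
        have h2 : 2 ≤ p ^ i := le_trans hp.two_le (Nat.le_self_pow hi p)
        omega
      · rintro rfl; simp
    simp [hiff, hp.ne_one]
  -- F * G = 1
  have hFG : F * G = 1 := by
    ext n
    rcases Nat.eq_zero_or_pos n with rfl | hn
    · simp
    rw [ArithmeticFunction.mul_apply, Nat.sum_divisorsAntidiagonal' (f := fun a b => F a * G b),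
      ArithmeticFunction.one_apply]
    rw [← hginv n hn]
    apply Finset.sum_congr rfl
    intro d hd
    have hd0 : d ≠ 0 := (Nat.pos_of_mem_divisors hd).ne'
    have hnd0 : n / d ≠ 0 := (Nat.div_pos (Nat.le_of_dvd hn (Nat.dvd_of_mem_divisors hd))
      (Nat.pos_of_mem_divisors hd)).ne'
    rw [hFapp _ hnd0, hGapp _ hd0]
  -- G = G'
  have hGG' : G = G' := by
    have hGF : G * F = 1 := by rw [mul_comm]; exact hFG
    exact left_inv_eq_right_inv hGF hFG'
  -- prime power bound transferred to rpow
  have hwb : ∀ p k : ℕ, p.Prime → |wfun f p k| ≤ ((p ^ k : ℕ) : ℝ) ^ (γ + β) := by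
    intro p k hp
    have hp2 : 2 ≤ p := hp.two_le
    have h1 := wfun_bound f C γ hC hf hp2 k
    have hppos : (0:ℝ) < (p:ℝ) := by positivity
    have hX : (0:ℝ) < (p:ℝ) ^ k := by positivity
    have hCk : (1 + C) ^ k ≤ ((p:ℝ) ^ k) ^ β := by
      have h2k : ((2:ℝ) ^ k) ^ β ≤ ((p:ℝ) ^ k) ^ β := by
        apply Real.rpow_le_rpow (by positivity) _ hβ0
        exact pow_le_pow_left₀ (by norm_num) (by exact_mod_cast hp2) k
      calc (1 + C) ^ k = ((2:ℝ) ^ β) ^ k := by rw [h2β]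
        _ = ((2:ℝ) ^ k) ^ β := by
            rw [← Real.rpow_natCast ((2:ℝ) ^ β) k, ← Real.rpow_mul (by norm_num),
              mul_comm, Real.rpow_mul (by norm_num), Real.rpow_natCast]
        _ ≤ ((p:ℝ) ^ k) ^ β := h2k
    calc |wfun f p k| ≤ ((p : ℝ) ^ k) ^ γ * (1 + C) ^ k := h1
      _ ≤ ((p : ℝ) ^ k) ^ γ * ((p:ℝ) ^ k) ^ β := by
          apply mul_le_mul_of_nonneg_left hCk (by positivity)
      _ = ((p ^ k : ℕ) : ℝ) ^ (γ + β) := by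
          rw [← Real.rpow_add hX, Nat.cast_pow]
  -- main bound
  intro n hn
  have hn0 : n ≠ 0 := by omega
  have hg_eq : g n = n.factorization.prod (fun p k => wfun f p k) := by
    rw [← hGapp n hn0, hGG', hG'app n hn0]
  rw [hg_eq]
  unfold Finsupp.prod
  calc |∏ p ∈ n.factorization.support, wfun f p (n.factorization p)|
      = ∏ p ∈ n.factorization.support, |wfun f p (n.factorization p)| :=
        Finset.abs_prod _ _
    _ ≤ ∏ p ∈ n.factorization.support, ((p ^ n.factorization p : ℕ) : ℝ) ^ (γ + β) := by
        apply Finset.prod_le_prod (fun _ _ => abs_nonneg _)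
        intro p hp
        exact hwb p _ (Nat.prime_of_mem_primeFactors (by simpa using hp))
    _ = (∏ p ∈ n.factorization.support, ((p ^ n.factorization p : ℕ) : ℝ)) ^ (γ + β) :=
        Real.finset_prod_rpow _ _ (fun _ _ => by positivity) _
    _ = (n : ℝ) ^ (γ + β) := by
        rw [← Nat.cast_prod]
        congr 1
        exact_mod_cast Nat.factorization_prod_pow_eq_self hn0
end

section
/- Let f : ℕ → ℝ be a multiplicative arithmetic function with f(1) = 1 such that f(p^k) = 0 for all primes p and all integers k ≥ 2. Assume there exist C > 0 and γ ∈ ℝ such that |f(n)| ≤ C n^γ for all n ≥ 2. Then for all n ≥ 2, the Dirichlet inverse satisfies |f⁻¹(n)| ≤ C^{Ω(n)} · n^γ. -/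
theorem stmt9 (f g : ℕ → ℝ) (hf1 : f 1 = 1)
    (hmult : ∀ m n : ℕ, 0 < m → 0 < n → Nat.Coprime m n → f (m * n) = f m * f n)
    (hzero : ∀ p k : ℕ, p.Prime → 2 ≤ k → f (p ^ k) = 0)
    (hginv : ∀ n : ℕ, 0 < n →
      ∑ d ∈ n.divisors, f (n / d) * g d = if n = 1 then 1 else 0)
    (C : ℝ) (hC : 0 < C) (γ : ℝ)
    (hf : ∀ n : ℕ, 2 ≤ n → |f n| ≤ C * (n : ℝ) ^ γ) :
    ∀ n : ℕ, 2 ≤ n →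
      |g n| ≤ C ^ n.primeFactorsList.length * (n : ℝ) ^ γ := by
  classical
  set H : ℕ → ℝ := fun n => n.factorization.prod fun p k => (-f p) ^ k with hHdef
  have hH1 : H 1 = 1 := by simp [hHdef]
  have hHpp : ∀ p k : ℕ, p.Prime → H (p ^ k) = (-f p) ^ k := by
    intro p k hp
    rw [hHdef]
    simp only
    rw [Nat.Prime.factorization_pow hp]
    exact Finsupp.prod_single_index (pow_zero _)
  have hHmul : ∀ m n : ℕ, m ≠ 0 → n ≠ 0 → Nat.Coprime m n → H (m * n) = H m * H n := by
    intro m n hm hn _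
    rw [hHdef]
    simp only
    rw [Nat.factorization_mul hm hn]
    exact Finsupp.prod_add_index' (fun p => pow_zero _) (fun p a b => pow_add _ _ _)
  let F : ArithmeticFunction ℝ := ⟨fun n => if n = 0 then 0 else f n, by simp⟩
  let G : ArithmeticFunction ℝ := ⟨fun n => if n = 0 then 0 else H n, by simp⟩
  have hFapp : ∀ n : ℕ, n ≠ 0 → F n = f n := fun n hn => if_neg hn
  have hGapp : ∀ n : ℕ, n ≠ 0 → G n = H n := fun n hn => if_neg hn
  have hF : F.IsMultiplicative := by
    constructor
    · rw [hFapp 1 one_ne_zero, hf1]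
    · intro m n hmn
      rcases eq_or_ne m 0 with rfl | hm
      · have hn1 : n = 1 := by simpa using hmn
        subst hn1
        simp [F, hf1]
      rcases eq_or_ne n 0 with rfl | hn
      · have hm1 : m = 1 := by simpa using hmn
        subst hm1
        simp [F, hf1]
      rw [hFapp _ (Nat.mul_ne_zero hm hn), hFapp _ hm, hFapp _ hn]
      exact hmult m n (Nat.pos_of_ne_zero hm) (Nat.pos_of_ne_zero hn) hmn
  have hG : G.IsMultiplicative := by
    constructor
    · rw [hGapp 1 one_ne_zero, hH1]
    · intro m n hmn
      rcases eq_or_ne m 0 with rfl | hm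
      · have hn1 : n = 1 := by simpa using hmn
        subst hn1
        simp [G, hH1]
      rcases eq_or_ne n 0 with rfl | hn
      · have hm1 : m = 1 := by simpa using hmn
        subst hm1
        simp [G, hH1]
      rw [hGapp _ (Nat.mul_ne_zero hm hn), hGapp _ hm, hGapp _ hn]
      exact hHmul m n hm hn hmn
  have hFG : F * G = 1 := by
    rw [ArithmeticFunction.IsMultiplicative.eq_iff_eq_on_prime_powers _ (hF.mul hG) _ ArithmeticFunction.isMultiplicative_one]
    intro p i hp
    have hppos : 0 < p := hp.pos
    rw [ArithmeticFunction.mul_apply,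
      Nat.sum_divisorsAntidiagonal (f := fun x y => F x * G y),
      Nat.sum_divisors_prime_pow hp]
    have hterm : ∀ x ∈ Finset.range (i + 1),
        F (p ^ x) * G (p ^ i / p ^ x) = f (p ^ x) * (-f p) ^ (i - x) := by
      intro x hx
      have hxle : x ≤ i := Nat.lt_succ_iff.mp (Finset.mem_range.mp hx)
      rw [Nat.pow_div hxle hppos, hFapp _ (pow_ne_zero _ hp.ne_zero),
        hGapp _ (pow_ne_zero _ hp.ne_zero), hHpp p (i - x) hp]
    rw [Finset.sum_congr rfl hterm]
    rcases Nat.eq_zero_or_pos i with rfl | hi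
    · simp [hf1]
    · obtain ⟨k, rfl⟩ := Nat.exists_eq_succ_of_ne_zero hi.ne'
      have hne1 : p ^ (k + 1) ≠ 1 := by
        have : 2 ≤ p := hp.two_le
        have : 1 < p ^ (k + 1) := Nat.one_lt_pow (by omega) (by omega)
        omega
      rw [ArithmeticFunction.one_apply, if_neg hne1]
      rw [Finset.sum_range_succ']
      rw [Finset.sum_range_succ']
      have hz : ∀ x ∈ Finset.range k,
          f (p ^ (x + 1 + 1)) * (-f p) ^ (k + 1 - (x + 1 + 1)) = 0 := by
        intro x hx
        rw [hzero p (x + 1 + 1) hp (by omega), zero_mul]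
      rw [Finset.sum_congr rfl hz, Finset.sum_const_zero]
      have h1 : k + 1 - (0 + 1) = k := by omega
      have h2 : k + 1 - 0 = k + 1 := by omega
      rw [h1, h2]
      simp only [pow_zero, pow_one, hf1, one_mul, zero_add]
      ring
  have hgH : ∀ n : ℕ, 0 < n → g n = H n := by
    intro n
    induction n using Nat.strong_induction_on with
    | _ n ih =>
      intro hn
      have h1 := hginv n hn
      have h2 : ∑ d ∈ n.divisors, f (n / d) * H d = if n = 1 then 1 else 0 := by
        have hcon : (F * G) n = (1 : ArithmeticFunction ℝ) n := by rw [hFG]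
        rw [ArithmeticFunction.mul_apply,
          Nat.sum_divisorsAntidiagonal' (f := fun x y => F x * G y),
          ArithmeticFunction.one_apply] at hcon
        rw [← hcon]
        apply Finset.sum_congr rfl
        intro d hd
        have hd0 : d ≠ 0 := (Nat.pos_of_mem_divisors hd).ne'
        have hnd0 : n / d ≠ 0 := by
          have hdvd : d ∣ n := (Nat.mem_divisors.mp hd).1
          exact (Nat.div_pos (Nat.le_of_dvd hn hdvd) (Nat.pos_of_ne_zero hd0)).ne'
        rw [hFapp _ hnd0, hGapp _ hd0]
      have hnmem : n ∈ n.divisors := Nat.mem_divisors_self n hn.ne'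
      rw [← Finset.add_sum_erase _ _ hnmem] at h1 h2
      have hsum : ∑ d ∈ n.divisors.erase n, f (n / d) * g d
          = ∑ d ∈ n.divisors.erase n, f (n / d) * H d := by
        apply Finset.sum_congr rfl
        intro d hd
        have hd' := Finset.mem_of_mem_erase hd
        have hdne := Finset.ne_of_mem_erase hd
        have hdpos := Nat.pos_of_mem_divisors hd'
        have hdlt : d < n :=
          lt_of_le_of_ne (Nat.le_of_dvd hn (Nat.mem_divisors.mp hd').1) hdne
        rw [ih d hdlt hdpos]
      rw [hsum] at h1
      rw [Nat.div_self hn, hf1, one_mul] at h1 h2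
      linarith [h1, h2.symm ▸ h1]
  intro n hn
  have hn0 : n ≠ 0 := by omega
  rw [hgH n (by omega)]
  have hHn : H n = ∏ p ∈ n.primeFactors, (-f p) ^ n.factorization p := by
    rw [hHdef]
    rfl
  rw [hHn, Finset.abs_prod]
  have habs : ∀ p ∈ n.primeFactors,
      |(-f p) ^ n.factorization p| = |f p| ^ n.factorization p := by
    intro p _
    rw [abs_pow, abs_neg]
  rw [Finset.prod_congr rfl habs]
  have hlen : ∑ p ∈ n.primeFactors, n.factorization p = n.primeFactorsList.length := by
    rw [← Nat.toFinset_factors, ← Multiset.coe_card,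
      ← Multiset.toFinset_sum_count_eq]
    apply Finset.sum_congr rfl
    intro p _
    rw [Multiset.coe_count, Nat.primeFactorsList_count_eq]
  calc ∏ p ∈ n.primeFactors, |f p| ^ n.factorization p
      ≤ ∏ p ∈ n.primeFactors, (C * (p : ℝ) ^ γ) ^ n.factorization p := by
        apply Finset.prod_le_prod
        · intro p _
          exact pow_nonneg (abs_nonneg _) _
        · intro p hp
          exact pow_le_pow_left₀ (abs_nonneg _)
            (hf p (Nat.prime_of_mem_primeFactors hp).two_le) _
    _ = (∏ p ∈ n.primeFactors, C ^ n.factorization p) *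
        ∏ p ∈ n.primeFactors, ((p : ℝ) ^ γ) ^ n.factorization p := by
        rw [← Finset.prod_mul_distrib]
        exact Finset.prod_congr rfl fun p _ => mul_pow _ _ _
    _ = C ^ n.primeFactorsList.length * (n : ℝ) ^ γ := by
        congr 1
        · rw [Finset.prod_pow_eq_pow_sum, hlen]
        · have hstep : ∀ p ∈ n.primeFactors,
              ((p : ℝ) ^ γ) ^ n.factorization p
                = ((p : ℝ) ^ n.factorization p) ^ γ := by
            intro p _
            rw [← Real.rpow_natCast ((p : ℝ) ^ γ) _, ← Real.rpow_natCast (p : ℝ) (n.factorization p),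
              ← Real.rpow_mul (Nat.cast_nonneg p), ← Real.rpow_mul (Nat.cast_nonneg p), mul_comm]
          rw [Finset.prod_congr rfl hstep,
            Real.finset_prod_rpow _ _ (fun p _ => pow_nonneg (Nat.cast_nonneg p) _) γ]
          congr 1
          have := Nat.factorization_prod_pow_eq_self hn0
          have hcast : ((n.factorization.prod fun p k => p ^ k : ℕ) : ℝ) = (n : ℝ) := by
            rw [this]
          rw [← hcast]
          rw [Finsupp.prod]
          push_cast
          rfl
end

section
/- Let f : ℕ → ℝ be a multiplicative arithmetic function with f(1) = 1. Assume there exist A > 0 and c ∈ (0,1) such that |f(n)| ≤ A c^n for all n ≥ 2. Then for all n ≥ 2, the Dirichlet inverse satisfies |f⁻¹(n)| ≤ (A/(A+1))^{ω(n)} · (A+1)^{Ω(n)} · n^{3 ln c / ln 3}. -/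
open Finset ArithmeticFunction

/-- Dirichlet inverse values at prime powers, defined recursively. -/
noncomputable def hhAux (f : ℕ → ℝ) (p : ℕ) : ℕ → ℝ
  | 0 => 1
  | (k+1) => -∑ j ∈ (Finset.range (k+1)).attach,
      f (p ^ (k+1-j.1)) * hhAux f p j.1
  decreasing_by exact Finset.mem_range.mp j.2

lemma hhAux_zero (f : ℕ → ℝ) (p : ℕ) : hhAux f p 0 = 1 := by
  rw [hhAux]

lemma hhAux_succ (f : ℕ → ℝ) (p k : ℕ) :
    hhAux f p (k+1) = -∑ j ∈ Finset.range (k+1), f (p ^ (k+1-j)) * hhAux f p j := by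
  rw [hhAux, ← Finset.sum_attach (Finset.range (k+1)) (fun j => f (p ^ (k+1-j)) * hhAux f p j)]

noncomputable def Ffun (f : ℕ → ℝ) : ArithmeticFunction ℝ :=
  ⟨fun n => if n = 0 then 0 else f n, by simp⟩

noncomputable def Gfun (f : ℕ → ℝ) : ArithmeticFunction ℝ :=
  ⟨fun n => if n = 0 then 0 else n.factorization.prod (hhAux f), by simp⟩

lemma Ffun_apply (f : ℕ → ℝ) {n : ℕ} (hn : n ≠ 0) : Ffun f n = f n := by
  simp [Ffun, hn]

lemma Gfun_apply (f : ℕ → ℝ) {n : ℕ} (hn : n ≠ 0) :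
    Gfun f n = n.factorization.prod (hhAux f) := by
  simp [Gfun, hn]

lemma Gfun_prime_pow (f : ℕ → ℝ) {p : ℕ} (hp : p.Prime) (k : ℕ) :
    Gfun f (p ^ k) = hhAux f p k := by
  rw [Gfun_apply f (pow_ne_zero k hp.ne_zero), hp.factorization_pow,
    Finsupp.prod_single_index (hhAux_zero f p)]

lemma Ffun_isMult (f : ℕ → ℝ) (hf1 : f 1 = 1)
    (hmult : ∀ m n : ℕ, 0 < m → 0 < n → Nat.Coprime m n → f (m * n) = f m * f n) :
    (Ffun f).IsMultiplicative := by
  rw [ArithmeticFunction.IsMultiplicative.iff_ne_zero]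
  refine ⟨by simp [Ffun, hf1], ?_⟩
  intro m n hm hn hmn
  rw [Ffun_apply f (mul_ne_zero hm hn), Ffun_apply f hm, Ffun_apply f hn]
  exact hmult m n (Nat.pos_of_ne_zero hm) (Nat.pos_of_ne_zero hn) hmn

lemma Gfun_isMult (f : ℕ → ℝ) : (Gfun f).IsMultiplicative := by
  rw [ArithmeticFunction.IsMultiplicative.iff_ne_zero]
  refine ⟨by simp [Gfun], ?_⟩
  intro m n hm hn hmn
  rw [Gfun_apply f (mul_ne_zero hm hn), Gfun_apply f hm, Gfun_apply f hn,
    Nat.factorization_mul_of_coprime hmn]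
  exact Finsupp.prod_add_index_of_disjoint
    (by rw [Nat.support_factorization, Nat.support_factorization]
        exact hmn.disjoint_primeFactors) _

lemma Ffun_mul_Gfun (f : ℕ → ℝ) (hf1 : f 1 = 1)
    (hmult : ∀ m n : ℕ, 0 < m → 0 < n → Nat.Coprime m n → f (m * n) = f m * f n) :
    Ffun f * Gfun f = 1 := by
  rw [ArithmeticFunction.IsMultiplicative.eq_iff_eq_on_prime_powers _
    ((Ffun_isMult f hf1 hmult).mul (Gfun_isMult f)) _
    ArithmeticFunction.isMultiplicative_one]
  intro p k hp
  rw [ArithmeticFunction.mul_apply]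
  have h1 : ∑ x ∈ (p ^ k).divisorsAntidiagonal, Ffun f x.1 * Gfun f x.2
      = ∑ d ∈ (p ^ k).divisors, Ffun f (p ^ k / d) * Gfun f d := by
    exact Nat.sum_divisorsAntidiagonal' (fun a b => Ffun f a * Gfun f b)
  rw [h1, Nat.sum_divisors_prime_pow hp]
  have h2 : ∀ i ∈ Finset.range (k + 1),
      Ffun f (p ^ k / p ^ i) * Gfun f (p ^ i) = f (p ^ (k - i)) * hhAux f p i := by
    intro i hi
    rw [Finset.mem_range] at hi
    rw [Nat.pow_div (Nat.lt_succ_iff.mp hi) hp.pos, Gfun_prime_pow f hp,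
      Ffun_apply f (pow_ne_zero _ hp.ne_zero)]
  rw [Finset.sum_congr rfl h2]
  rcases k with _ | m
  · simp [hf1, hhAux_zero]
  · have hne : p ^ (m + 1) ≠ 1 := by
      exact Nat.one_lt_pow (Nat.succ_ne_zero m) hp.one_lt |>.ne'
    rw [ArithmeticFunction.one_apply, if_neg hne, Finset.sum_range_succ]
    simp [hhAux_succ, hf1]

lemma g_eq_Gfun (f g : ℕ → ℝ) (hf1 : f 1 = 1)
    (hmult : ∀ m n : ℕ, 0 < m → 0 < n → Nat.Coprime m n → f (m * n) = f m * f n)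
    (hginv : ∀ n : ℕ, 0 < n →
      ∑ d ∈ n.divisors, f (n / d) * g d = if n = 1 then 1 else 0) :
    ∀ n : ℕ, 0 < n → g n = Gfun f n := by
  have hG : ∀ n : ℕ, 0 < n →
      ∑ d ∈ n.divisors, f (n / d) * Gfun f d = if n = 1 then 1 else 0 := by
    intro n hn
    have := congrArg (fun F : ArithmeticFunction ℝ => F n) (Ffun_mul_Gfun f hf1 hmult)
    simp only [ArithmeticFunction.mul_apply, ArithmeticFunction.one_apply] at this
    rw [← this, Nat.sum_divisorsAntidiagonal' (fun a b => Ffun f a * Gfun f b)]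
    refine Finset.sum_congr rfl fun d hd => ?_
    rw [Nat.mem_divisors] at hd
    have hdpos : 0 < d := Nat.pos_of_ne_zero (fun h => hd.2 (by subst h; exact Nat.eq_zero_of_zero_dvd hd.1))
    have : n / d ≠ 0 := (Nat.div_pos (Nat.le_of_dvd hn hd.1) hdpos).ne'
    rw [Ffun_apply f this]
  intro n hn
  induction n using Nat.strong_induction_on with
  | _ n ih =>
    have key : ∑ d ∈ n.divisors, f (n / d) * (g d - Gfun f d) = 0 := by
      have := hginv n hn
      have h2 := hG n hn
      simp only [mul_sub, Finset.sum_sub_distrib, this, h2]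
      ring
    have hmem : n ∈ n.divisors := Nat.mem_divisors_self n hn.ne'
    have hz : ∀ d ∈ n.divisors, d ≠ n → f (n / d) * (g d - Gfun f d) = 0 := by
      intro d hd hdn
      rw [Nat.mem_divisors] at hd
      have hdpos : 0 < d := Nat.pos_of_mem_divisors (Nat.mem_divisors.mpr hd)
      have hdlt : d < n := lt_of_le_of_ne (Nat.le_of_dvd hn hd.1) hdn
      rw [ih d hdlt hdpos, sub_self, mul_zero]
    have := Finset.sum_eq_single_of_mem n hmem hz
    rw [key] at this
    rw [Nat.div_self hn, hf1, one_mul] at this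
    linarith [this.symm]

/-- The key natural-number inequality: `p ^ (3 j) ≤ 3 ^ (p ^ j)` for `p ≥ 2`, `j ≥ 1`. -/
lemma nat_pow_ineq {p j : ℕ} (hp : 2 ≤ p) (hj : 1 ≤ j) : p ^ (3 * j) ≤ 3 ^ p ^ j := by
  rcases eq_or_lt_of_le hp with h2 | h3
  · -- p = 2 : show 8^j ≤ 3^(2^j)
    subst h2
    clear hp
    induction j with
    | zero => omega
    | succ m ihm =>
      rcases Nat.eq_zero_or_pos m with rfl | hm
      · norm_num
      · have ih := ihm hm
        have h8 : (8:ℕ) ≤ 3 ^ 2 ^ m := by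
          calc (8:ℕ) ≤ 2 ^ (3 * m) := by
                calc (8:ℕ) = 2 ^ 3 := by norm_num
                _ ≤ 2 ^ (3 * m) := Nat.pow_le_pow_right (by norm_num) (by omega)
          _ ≤ 3 ^ 2 ^ m := ih
        calc 2 ^ (3 * (m + 1)) = 2 ^ (3 * m) * 8 := by ring
          _ ≤ 3 ^ 2 ^ m * 3 ^ 2 ^ m := Nat.mul_le_mul ih h8
          _ = 3 ^ (2 ^ m + 2 ^ m) := (pow_add 3 _ _).symm
          _ = 3 ^ 2 ^ (m + 1) := by ring_nf
  · -- p ≥ 3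
    have hp3 : 3 ≤ p := h3
    have cube : ∀ q : ℕ, 3 ≤ q → q ^ 3 ≤ 3 ^ q := by
      intro q hq
      induction q with
      | zero => omega
      | succ m ihm =>
        rcases Nat.lt_or_ge m 3 with hm | hm
        · interval_cases m <;> norm_num <;> omega
        · have ih := ihm hm
          have h1 : 3 * m ^ 2 ≤ m ^ 3 := by nlinarith
          have h4 : 27 ≤ m ^ 3 := by
            calc (27:ℕ) = 3 ^ 3 := by norm_num
              _ ≤ m ^ 3 := Nat.pow_le_pow_left hm 3
          have h2 : 3 * m ≤ m ^ 2 := by nlinarith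
          calc (m + 1) ^ 3 ≤ 3 * m ^ 3 := by nlinarith
            _ ≤ 3 * 3 ^ m := by omega
            _ = 3 ^ (m + 1) := by ring
    have hjle : j ≤ p ^ (j - 1) := by
      calc j ≤ 2 ^ (j - 1) := by
            have := Nat.lt_two_pow_self (n := j - 1)
            omega
        _ ≤ p ^ (j - 1) := Nat.pow_le_pow_left hp _
    have hpj : p * j ≤ p ^ j := by
      calc p * j ≤ p * p ^ (j - 1) := Nat.mul_le_mul_left p hjle
        _ = p ^ j := by
          rw [← pow_succ']
          congr 1
          omega
    calc p ^ (3 * j) = (p ^ 3) ^ j := by rw [← pow_mul]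
      _ ≤ (3 ^ p) ^ j := Nat.pow_le_pow_left (cube p hp3) j
      _ = 3 ^ (p * j) := by rw [← pow_mul]
      _ ≤ 3 ^ p ^ j := Nat.pow_le_pow_right (by norm_num) hpj

lemma c_pow_le {c : ℝ} (hc0 : 0 < c) (hc1 : c < 1) {p j : ℕ} (hp : 2 ≤ p) (hj : 1 ≤ j) :
    c ^ (p ^ j) ≤ ((p : ℝ) ^ (3 * Real.log c / Real.log 3)) ^ j := by
  have hppos : (0:ℝ) < p := by positivity
  have hlogc : Real.log c < 0 := Real.log_neg hc0 hc1
  have hlog3 : (0:ℝ) < Real.log 3 := Real.log_pos (by norm_num)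
  -- key real inequality from nat_pow_ineq
  have hkey : 3 * (j : ℝ) * Real.log p ≤ (p ^ j : ℕ) * Real.log 3 := by
    have := nat_pow_ineq hp hj
    have hlog := Real.log_le_log (by positivity) (show
      ((p : ℝ)) ^ (3 * j) ≤ (3 : ℝ) ^ (p ^ j : ℕ) by exact_mod_cast this)
    rw [Real.log_pow, Real.log_pow] at hlog
    push_cast at hlog ⊢
    linarith
  -- rewrite both sides via rpow/exp
  have hrw : ((p : ℝ) ^ (3 * Real.log c / Real.log 3)) ^ j
      = Real.exp ((j : ℝ) * (Real.log p * (3 * Real.log c / Real.log 3))) := by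
    rw [Real.rpow_def_of_pos hppos, ← Real.exp_nat_mul]
  have hlw : c ^ (p ^ j) = Real.exp ((p ^ j : ℕ) * Real.log c) := by
    rw [← Real.log_pow, Real.exp_log (by positivity)]
  rw [hrw, hlw, Real.exp_le_exp]
  have h3 : (j:ℝ) * (Real.log p * (3 * Real.log c / Real.log 3))
      = 3 * (j:ℝ) * Real.log p * Real.log c / Real.log 3 := by ring
  rw [h3, le_div_iff₀ hlog3]
  have h4 := mul_le_mul_of_nonpos_right hkey hlogc.le
  nlinarith [h4]

lemma hhAux_bound (f : ℕ → ℝ) {A c : ℝ} (hA : 0 < A) (hc0 : 0 < c) (hc1 : c < 1)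
    (hf : ∀ n : ℕ, 2 ≤ n → |f n| ≤ A * c ^ n) {p : ℕ} (hp : p.Prime) :
    ∀ k : ℕ, 1 ≤ k → |hhAux f p k| ≤
      A * (A + 1) ^ (k - 1) * ((p : ℝ) ^ (3 * Real.log c / Real.log 3)) ^ k := by
  set t : ℝ := (p : ℝ) ^ (3 * Real.log c / Real.log 3) with ht
  have hppos : (0:ℝ) < p := by exact_mod_cast hp.pos
  have htpos : 0 < t := Real.rpow_pos_of_pos hppos _
  have hfb : ∀ j : ℕ, 1 ≤ j → |f (p ^ j)| ≤ A * t ^ j := by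
    intro j hj
    have h2 : 2 ≤ p ^ j := by
      calc 2 ≤ p := hp.two_le
        _ = p ^ 1 := (pow_one p).symm
        _ ≤ p ^ j := Nat.pow_le_pow_right hp.pos hj
    calc |f (p ^ j)| ≤ A * c ^ (p ^ j) := hf _ h2
      _ ≤ A * t ^ j := by
        have := c_pow_le hc0 hc1 hp.two_le hj
        nlinarith
  intro k
  induction k using Nat.strong_induction_on with
  | _ k ih =>
    intro hk
    obtain ⟨m, rfl⟩ := Nat.exists_eq_add_of_le hk
    have hdef : hhAux f p (1 + m) = -∑ j ∈ Finset.range (m+1), f (p ^ (m+1-j)) * hhAux f p j := by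
      rw [add_comm 1 m, hhAux_succ]
    have habs : |hhAux f p (1 + m)| ≤ ∑ j ∈ Finset.range (m+1), |f (p ^ (m+1-j))| * |hhAux f p j| := by
      rw [hdef, abs_neg]
      calc |∑ j ∈ Finset.range (m+1), f (p ^ (m+1-j)) * hhAux f p j|
          ≤ ∑ j ∈ Finset.range (m+1), |f (p ^ (m+1-j)) * hhAux f p j| :=
            Finset.abs_sum_le_sum_abs _ _
        _ = ∑ j ∈ Finset.range (m+1), |f (p ^ (m+1-j))| * |hhAux f p j| := by
            simp [abs_mul]
    have hterm : ∀ j ∈ Finset.range (m+1), |f (p ^ (m+1-j))| * |hhAux f p j| ≤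
        (if j = 0 then A * t ^ (m+1) else A * t ^ (m+1-j) * (A * (A+1) ^ (j-1) * t ^ j)) := by
      intro j hj
      rw [Finset.mem_range] at hj
      rcases Nat.eq_zero_or_pos j with rfl | hjpos
      · simp only [if_pos rfl]
        rw [hhAux_zero, abs_one, mul_one, Nat.sub_zero]
        exact hfb (m+1) (by omega)
      · rw [if_neg hjpos.ne']
        have h1 : |f (p ^ (m+1-j))| ≤ A * t ^ (m+1-j) := hfb _ (by omega)
        have h2 : |hhAux f p j| ≤ A * (A+1) ^ (j-1) * t ^ j := ih j (by omega) hjpos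
        have := mul_le_mul h1 h2 (abs_nonneg _) (by positivity)
        linarith
    have hsum := Finset.sum_le_sum hterm
    -- compute the RHS sum
    have hval : ∑ j ∈ Finset.range (m+1),
        (if j = 0 then A * t ^ (m+1) else A * t ^ (m+1-j) * (A * (A+1) ^ (j-1) * t ^ j))
        = A * (A+1) ^ m * t ^ (m+1) := by
      rw [Finset.sum_range_succ']
      have hre : ∀ i ∈ Finset.range m,
          (if i + 1 = 0 then A * t ^ (m+1)
            else A * t ^ (m+1-(i+1)) * (A * (A+1) ^ (i+1-1) * t ^ (i+1)))
          = A * A * t ^ (m+1) * (A+1) ^ i := by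
        intro i hi
        rw [Finset.mem_range] at hi
        rw [if_neg (Nat.succ_ne_zero i)]
        have hts : t ^ (m+1-(i+1)) * t ^ (i+1) = t ^ (m+1) := by
          rw [← pow_add]
          congr 1
          omega
        simp only [Nat.add_sub_cancel]
        calc A * t ^ (m+1-(i+1)) * (A * (A + 1) ^ i * t ^ (i + 1))
            = A * A * (A + 1) ^ i * (t ^ (m+1-(i+1)) * t ^ (i + 1)) := by ring
          _ = A * A * t ^ (m + 1) * (A + 1) ^ i := by rw [hts]; ring
      rw [Finset.sum_congr rfl hre, if_pos rfl, ← Finset.mul_sum]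
      have hgeom : ∑ i ∈ Finset.range m, (A+1) ^ i = ((A+1) ^ m - 1) / A := by
        rw [geom_sum_eq (by intro h; nlinarith [h]) m]
        congr 1
        ring
      rw [hgeom]
      field_simp
      ring
    have : (1 + m) - 1 = m := by omega
    rw [this]
    calc |hhAux f p (1 + m)| ≤ _ := habs
      _ ≤ _ := hsum
      _ = A * (A+1) ^ m * t ^ (m+1) := hval
      _ = A * (A + 1) ^ m * t ^ (1 + m) := by rw [add_comm 1 m]

lemma len_eq (n : ℕ) :
    n.primeFactorsList.length = ∑ p ∈ n.primeFactors, n.factorization p := by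
  have h1 := Multiset.toFinsupp_sum_eq (n.primeFactorsList : Multiset ℕ)
  rw [Multiset.coe_card, ← Nat.factorization_eq_primeFactorsList_multiset] at h1
  rw [← h1]
  rfl

theorem stmt10 (f g : ℕ → ℝ) (hf1 : f 1 = 1)
    (hmult : ∀ m n : ℕ, 0 < m → 0 < n → Nat.Coprime m n → f (m * n) = f m * f n)
    (hginv : ∀ n : ℕ, 0 < n →
      ∑ d ∈ n.divisors, f (n / d) * g d = if n = 1 then 1 else 0)
    (A c : ℝ) (hA : 0 < A) (hc0 : 0 < c) (hc1 : c < 1)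
    (hf : ∀ n : ℕ, 2 ≤ n → |f n| ≤ A * c ^ n) :
    ∀ n : ℕ, 2 ≤ n →
      |g n| ≤ (A / (A + 1)) ^ n.primeFactors.card *
        (A + 1) ^ n.primeFactorsList.length *
        (n : ℝ) ^ (3 * Real.log c / Real.log 3) := by
  intro n hn
  have hn0 : n ≠ 0 := by omega
  set x : ℝ := 3 * Real.log c / Real.log 3 with hx
  rw [g_eq_Gfun f g hf1 hmult hginv n (by omega), Gfun_apply f hn0]
  -- the Finsupp.prod is a product over primeFactors
  have hprod : n.factorization.prod (hhAux f) =
      ∏ p ∈ n.primeFactors, hhAux f p (n.factorization p) := rfl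
  rw [hprod, Finset.abs_prod]
  have hbound : ∀ p ∈ n.primeFactors, |hhAux f p (n.factorization p)| ≤
      (A / (A + 1)) * (A + 1) ^ (n.factorization p) * ((p : ℝ) ^ x) ^ (n.factorization p) := by
    intro p hp
    have hpp : p.Prime := Nat.prime_of_mem_primeFactors hp
    have hk : 1 ≤ n.factorization p := by
      have : p ∈ n.factorization.support := by rw [Nat.support_factorization]; exact hp
      have := Finsupp.mem_support_iff.mp this
      omega
    have := hhAux_bound f hA hc0 hc1 hf hpp (n.factorization p) hk
    have heq : A * (A + 1) ^ (n.factorization p - 1) =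
        (A / (A + 1)) * (A + 1) ^ (n.factorization p) := by
      have h1 : (A + 1) ^ (n.factorization p) = (A + 1) * (A + 1) ^ (n.factorization p - 1) := by
        rw [← pow_succ']
        congr 1
        omega
      rw [h1]
      field_simp
    rw [heq] at this
    exact this
  have habs_nonneg : ∀ p ∈ n.primeFactors, (0:ℝ) ≤ |hhAux f p (n.factorization p)| :=
    fun p _ => abs_nonneg _
  have hle := Finset.prod_le_prod habs_nonneg hbound
  refine le_trans hle (le_of_eq ?_)
  rw [Finset.prod_mul_distrib, Finset.prod_mul_distrib, Finset.prod_const,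
    Finset.prod_pow_eq_pow_sum, ← len_eq]
  congr 1
  -- remaining : ∏ ((p:ℝ)^x)^(k_p) = (n:ℝ)^x
  have h1 : ∀ p ∈ n.primeFactors,
      ((p : ℝ) ^ x) ^ (n.factorization p) = ((p ^ n.factorization p : ℕ) : ℝ) ^ x := by
    intro p hp
    have hppos : (0:ℝ) < p := by
      exact_mod_cast (Nat.prime_of_mem_primeFactors hp).pos
    push_cast
    rw [← Real.rpow_natCast ((p:ℝ) ^ x) (n.factorization p),
      ← Real.rpow_natCast (p:ℝ) (n.factorization p),
      ← Real.rpow_mul hppos.le, ← Real.rpow_mul hppos.le, mul_comm]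
  rw [Finset.prod_congr rfl h1, Real.finset_prod_rpow _ _ (fun p _ => by positivity) x]
  congr 1
  rw [← Nat.cast_prod]
  congr 1
  exact Nat.factorization_prod_pow_eq_self hn0
end

section
/- Let f : ℕ → ℝ be a multiplicative arithmetic function with f(1) = 1. Assume there exist A > 0 and c ∈ (0,1) such that |f(n)| ≤ A c^n for all n ≥ 2. Then for all n ≥ 2, the Dirichlet inverse satisfies |f⁻¹(n)| ≤ n^{3 ln c / ln 3 + ln(1+A)/ln 2}. -/
open Finset

/-- Values of the putative inverse at prime powers, defined by the usual recurrence. -/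
noncomputable def hpw (f : ℕ → ℝ) (p : ℕ) : ℕ → ℝ
  | 0 => 1
  | (k+1) => -∑ j ∈ (Finset.range (k+1)).attach, f (p ^ (k+1-(j:ℕ))) * hpw f p j
  decreasing_by exact Finset.mem_range.mp j.2

/-- The multiplicative extension of `hpw`. -/
noncomputable def Hfun (f : ℕ → ℝ) (n : ℕ) : ℝ :=
  if n = 0 then 0 else n.factorization.prod fun p k => hpw f p k

lemma hpw_zero (f : ℕ → ℝ) (p : ℕ) : hpw f p 0 = 1 := by simp [hpw]

lemma hpw_succ (f : ℕ → ℝ) (p k : ℕ) :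
    hpw f p (k+1) = -∑ j ∈ Finset.range (k+1), f (p ^ (k+1-j)) * hpw f p j := by
  rw [hpw]
  exact congrArg Neg.neg
    (Finset.sum_attach (Finset.range (k+1)) (fun j => f (p ^ (k+1-j)) * hpw f p j))

lemma Hfun_one (f : ℕ → ℝ) : Hfun f 1 = 1 := by
  simp [Hfun]

lemma Hfun_prime_pow {f : ℕ → ℝ} {p : ℕ} (hp : p.Prime) (k : ℕ) :
    Hfun f (p ^ k) = hpw f p k := by
  rw [Hfun, if_neg (pow_ne_zero _ hp.ne_zero), hp.factorization_pow]
  exact Finsupp.prod_single_index (hpw_zero f p)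

lemma cube_le_three_pow : ∀ p : ℕ, 2 ≤ p → p ^ 3 ≤ 3 ^ p := by
  intro p hp
  induction p with
  | zero => omega
  | succ n ih =>
    rcases Nat.lt_or_ge n 3 with h | h
    · interval_cases n <;> norm_num
    · have h1 := ih (by omega)
      have ha : 3 * n ^ 2 ≤ n ^ 3 := by
        calc 3 * n ^ 2 ≤ n * n ^ 2 := Nat.mul_le_mul_right _ (by omega)
          _ = n ^ 3 := by ring
      have hb : 3 * n ≤ n ^ 2 := by
        calc 3 * n ≤ n * n := Nat.mul_le_mul_right _ (by omega)
          _ = n ^ 2 := by ring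
      have h2 : (n + 1) ^ 3 ≤ 3 * n ^ 3 := by nlinarith [ha, hb, h]
      calc (n + 1) ^ 3 ≤ 3 * n ^ 3 := h2
        _ ≤ 3 * 3 ^ n := by nlinarith
        _ = 3 ^ (n + 1) := by ring

lemma mul_le_pow_self {p : ℕ} (hp : 2 ≤ p) : ∀ i : ℕ, 1 ≤ i → p * i ≤ p ^ i := by
  intro i hi
  induction i with
  | zero => omega
  | succ n ih =>
    rcases Nat.eq_or_lt_of_le hi with h | h
    · simp [← h]
    · have h1 := ih (by omega)
      have h2 : p ≤ p ^ n := Nat.le_self_pow (by omega) p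
      calc p * (n + 1) = p * n + p := by ring
        _ ≤ p ^ n + p ^ n := by omega
        _ ≤ p ^ n * p := by nlinarith
        _ = p ^ (n + 1) := by ring

lemma geom_bound {A x : ℝ} (hA : 0 < A) (hx : 0 ≤ x) (hxA : x ≤ 1 / (1 + A)) :
    ∀ k : ℕ, ∑ i ∈ Finset.range k, A * x ^ (i + 1) ≤ 1 := by
  have h1A : (0:ℝ) < 1 + A := by linarith
  intro k
  induction k with
  | zero => simp
  | succ k ih =>
    rw [Finset.sum_range_succ']
    have h2 : ∑ i ∈ Finset.range k, A * x ^ (i + 1 + 1)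
        = x * ∑ i ∈ Finset.range k, A * x ^ (i + 1) := by
      rw [Finset.mul_sum]
      exact Finset.sum_congr rfl fun i _ => by ring
    rw [h2]
    calc x * ∑ i ∈ Finset.range k, A * x ^ (i + 1) + A * x ^ (0 + 1)
        ≤ x * 1 + A * x := by
          have h3 := mul_le_mul_of_nonneg_left ih hx
          have h4 : x ^ (0 + 1) = x := by norm_num
          rw [h4]
          linarith
      _ = x * (1 + A) := by ring
      _ ≤ (1 / (1 + A)) * (1 + A) := by
          exact mul_le_mul_of_nonneg_right hxA (le_of_lt h1A)
      _ = 1 := by field_simp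

/-- The key analytic inequality: `c^p / p^β ≤ 1/(1+A)` for `p` prime. -/
lemma key_ratio {A c : ℝ} (hA : 0 < A) (hc0 : 0 < c) (hc1 : c < 1)
    {p : ℕ} (hp : p.Prime) :
    c ^ p / (p : ℝ) ^ (3 * Real.log c / Real.log 3 + Real.log (1 + A) / Real.log 2)
      ≤ 1 / (1 + A) := by
  set β := 3 * Real.log c / Real.log 3 + Real.log (1 + A) / Real.log 2 with hβ
  have hq2 : (2:ℝ) ≤ (p:ℝ) := by exact_mod_cast hp.two_le
  have hq0 : (0:ℝ) < (p:ℝ) := by linarith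
  have h1A : (0:ℝ) < 1 + A := by linarith
  have hlogc : Real.log c < 0 := Real.log_neg hc0 hc1
  have hlog3 : (0:ℝ) < Real.log 3 := Real.log_pos (by norm_num)
  have hlog2 : (0:ℝ) < Real.log 2 := Real.log_pos (by norm_num)
  have hlogq : Real.log 2 ≤ Real.log (p:ℝ) := Real.log_le_log (by norm_num) hq2
  have hlogq0 : 0 < Real.log (p:ℝ) := lt_of_lt_of_le hlog2 hlogq
  -- Claim 1 : c ^ p ≤ q ^ (3 log c / log 3)
  have hq3 : ((p:ℝ)) ^ (3:ℕ) ≤ (3:ℝ) ^ (p:ℕ) := by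
    have := cube_le_three_pow p hp.two_le
    exact_mod_cast this
  have hlog_ineq : 3 * Real.log (p:ℝ) ≤ (p:ℝ) * Real.log 3 := by
    have := Real.log_le_log (by positivity) hq3
    rw [Real.log_pow, Real.log_pow] at this
    push_cast at this
    linarith
  have claim1 : c ^ p ≤ (p:ℝ) ^ (3 * Real.log c / Real.log 3) := by
    have hcp : c ^ p = Real.exp ((p:ℝ) * Real.log c) := by
      rw [← Real.log_pow, Real.exp_log (by positivity)]
    have hqr : (p:ℝ) ^ (3 * Real.log c / Real.log 3)
        = Real.exp (Real.log (p:ℝ) * (3 * Real.log c / Real.log 3)) :=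
      Real.rpow_def_of_pos hq0 _
    rw [hcp, hqr]
    apply Real.exp_le_exp.mpr
    rw [div_eq_mul_inv]
    have key : (p:ℝ) * Real.log c ≤ (3 * Real.log (p:ℝ) / Real.log 3) * Real.log c := by
      apply mul_le_mul_of_nonpos_right _ (le_of_lt hlogc)
      rw [div_le_iff₀ hlog3]
      linarith
    calc (p:ℝ) * Real.log c ≤ (3 * Real.log (p:ℝ) / Real.log 3) * Real.log c := key
      _ = Real.log (p:ℝ) * (3 * Real.log c * (Real.log 3)⁻¹) := by ring
  -- Claim 2 : 1 + A ≤ q ^ (log (1+A) / log 2)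
  have hlog1A : 0 < Real.log (1 + A) := Real.log_pos (by linarith)
  have claim2 : (1 + A) ≤ (p:ℝ) ^ (Real.log (1 + A) / Real.log 2) := by
    have h2 : (p:ℝ) ^ (Real.log (1 + A) / Real.log 2)
        = Real.exp (Real.log (p:ℝ) * (Real.log (1 + A) / Real.log 2)) :=
      Real.rpow_def_of_pos hq0 _
    have h5 : (1:ℝ) ≤ Real.log (p:ℝ) / Real.log 2 := (one_le_div hlog2).mpr hlogq
    have h6 : Real.log (1 + A) ≤ Real.log (p:ℝ) * (Real.log (1 + A) / Real.log 2) := by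
      have h7 := mul_le_mul_of_nonneg_left h5 hlog1A.le
      rw [mul_one] at h7
      calc Real.log (1 + A) ≤ Real.log (1 + A) * (Real.log (p:ℝ) / Real.log 2) := h7
        _ = Real.log (p:ℝ) * (Real.log (1 + A) / Real.log 2) := by ring
    calc 1 + A = Real.exp (Real.log (1 + A)) := (Real.exp_log h1A).symm
      _ ≤ Real.exp (Real.log (p:ℝ) * (Real.log (1 + A) / Real.log 2)) :=
          Real.exp_le_exp.mpr h6
      _ = (p:ℝ) ^ (Real.log (1 + A) / Real.log 2) := h2.symm
  -- combine
  have hsplit : (p:ℝ) ^ β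
      = (p:ℝ) ^ (3 * Real.log c / Real.log 3) * (p:ℝ) ^ (Real.log (1 + A) / Real.log 2) := by
    rw [hβ, Real.rpow_add hq0]
  have ht1 : (0:ℝ) < (p:ℝ) ^ (3 * Real.log c / Real.log 3) := Real.rpow_pos_of_pos hq0 _
  rw [hsplit]
  calc c ^ p / ((p:ℝ) ^ (3 * Real.log c / Real.log 3) * (p:ℝ) ^ (Real.log (1 + A) / Real.log 2))
      ≤ (p:ℝ) ^ (3 * Real.log c / Real.log 3)
        / ((p:ℝ) ^ (3 * Real.log c / Real.log 3) * (1 + A)) := by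
        apply div_le_div₀ (le_of_lt ht1) claim1 (by positivity)
        exact mul_le_mul_of_nonneg_left claim2 (le_of_lt ht1)
    _ = 1 / (1 + A) := by
        rw [div_mul_eq_div_div, div_self (ne_of_gt ht1)]

/-- Bound on the inverse at prime powers. -/
lemma hpw_bound (f : ℕ → ℝ) {A c : ℝ} (hA : 0 < A) (hc0 : 0 < c) (hc1 : c < 1)
    (hf : ∀ n : ℕ, 2 ≤ n → |f n| ≤ A * c ^ n)
    {p : ℕ} (hp : p.Prime) :
    ∀ k : ℕ, |hpw f p k|
      ≤ ((p : ℝ) ^ (3 * Real.log c / Real.log 3 + Real.log (1 + A) / Real.log 2)) ^ k := by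
  set β := 3 * Real.log c / Real.log 3 + Real.log (1 + A) / Real.log 2 with hβ
  set B : ℝ := (p : ℝ) ^ β with hB
  have hq0 : (0:ℝ) < (p:ℝ) := by exact_mod_cast hp.pos
  have hB0 : 0 < B := Real.rpow_pos_of_pos hq0 _
  set x : ℝ := c ^ p / B with hx
  have hx0 : 0 ≤ x := by positivity
  have hxA : x ≤ 1 / (1 + A) := key_ratio hA hc0 hc1 hp
  intro k
  induction k using Nat.strong_induction_on with
  | _ k ih =>
    match k with
    | 0 => simp [hpw_zero]
    | (m+1) =>
      rw [hpw_succ, abs_neg]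
      have step1 : |∑ j ∈ Finset.range (m+1), f (p ^ (m+1-j)) * hpw f p j|
          ≤ ∑ j ∈ Finset.range (m+1), B ^ (m+1) * (A * x ^ (m+1-j)) := by
        refine le_trans (Finset.abs_sum_le_sum_abs _ _) (Finset.sum_le_sum ?_)
        intro j hj
        rw [Finset.mem_range] at hj
        have hj' : j ≤ m := by omega
        have h1 : 1 ≤ m + 1 - j := by omega
        have hpk2 : 2 ≤ p ^ (m+1-j) := by
          calc 2 ≤ p := hp.two_le
            _ = p ^ 1 := (pow_one p).symm
            _ ≤ p ^ (m+1-j) := Nat.pow_le_pow_right hp.pos h1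
        have hfb : |f (p ^ (m+1-j))| ≤ A * c ^ (p ^ (m+1-j)) := hf _ hpk2
        have hcb : c ^ (p ^ (m+1-j)) ≤ (c ^ p) ^ (m+1-j) := by
          rw [← pow_mul]
          exact pow_le_pow_of_le_one (le_of_lt hc0) (le_of_lt hc1)
            (mul_le_pow_self hp.two_le _ h1)
        have hgb : |hpw f p j| ≤ B ^ j := ih j (by omega)
        rw [abs_mul]
        have hBk : B ^ (m+1) = B ^ (m+1-j) * B ^ j := by
          rw [← pow_add]
          congr 1
          omega
        have hxpow : x ^ (m+1-j) = (c ^ p) ^ (m+1-j) / B ^ (m+1-j) := by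
          rw [hx, div_pow]
        calc |f (p ^ (m+1-j))| * |hpw f p j|
            ≤ (A * c ^ (p ^ (m+1-j))) * B ^ j := by
              apply mul_le_mul hfb hgb (abs_nonneg _)
              positivity
          _ ≤ (A * (c ^ p) ^ (m+1-j)) * B ^ j := by
              apply mul_le_mul_of_nonneg_right _ (by positivity)
              exact mul_le_mul_of_nonneg_left hcb (le_of_lt hA)
          _ = B ^ (m+1) * (A * x ^ (m+1-j)) := by
              rw [hxpow, hBk]
              field_simp
      have step2 : ∑ j ∈ Finset.range (m+1), B ^ (m+1) * (A * x ^ (m+1-j))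
          ≤ B ^ (m+1) := by
        rw [← Finset.mul_sum]
        have hrefl : ∑ j ∈ Finset.range (m+1), A * x ^ (m+1-j)
            = ∑ i ∈ Finset.range (m+1), A * x ^ (i+1) := by
          rw [← Finset.sum_range_reflect (fun i => A * x ^ (i+1)) (m+1)]
          apply Finset.sum_congr rfl
          intro j hj
          rw [Finset.mem_range] at hj
          congr 2
          omega
        rw [hrefl]
        calc B ^ (m+1) * ∑ i ∈ Finset.range (m+1), A * x ^ (i+1)
            ≤ B ^ (m+1) * 1 :=
              mul_le_mul_of_nonneg_left (geom_bound hA hx0 hxA (m+1)) (by positivity)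
          _ = B ^ (m+1) := mul_one _
      exact le_trans step1 step2

theorem stmt11 (f g : ℕ → ℝ) (hf1 : f 1 = 1)
    (hmult : ∀ m n : ℕ, 0 < m → 0 < n → Nat.Coprime m n → f (m * n) = f m * f n)
    (hginv : ∀ n : ℕ, 0 < n →
      ∑ d ∈ n.divisors, f (n / d) * g d = if n = 1 then 1 else 0)
    (A c : ℝ) (hA : 0 < A) (hc0 : 0 < c) (hc1 : c < 1)
    (hf : ∀ n : ℕ, 2 ≤ n → |f n| ≤ A * c ^ n) :
    ∀ n : ℕ, 2 ≤ n →
      |g n| ≤ (n : ℝ) ^ (3 * Real.log c / Real.log 3 +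
        Real.log (1 + A) / Real.log 2) := by
  set β := 3 * Real.log c / Real.log 3 + Real.log (1 + A) / Real.log 2 with hβ
  -- arithmetic functions
  set F : ArithmeticFunction ℝ := ⟨fun n => if n = 0 then 0 else f n, by simp⟩ with hFdef
  set H : ArithmeticFunction ℝ := ⟨fun n => if n = 0 then 0 else Hfun f n, by simp⟩ with hHdef
  have hFapply : ∀ n : ℕ, n ≠ 0 → F n = f n := fun n hn => if_neg hn
  have hHapply : ∀ n : ℕ, H n = Hfun f n := by
    intro n
    rcases eq_or_ne n 0 with rfl | hn
    · rw [ArithmeticFunction.map_zero, Hfun, if_pos rfl]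
    · exact if_neg hn
  have hFmult : F.IsMultiplicative := by
    rw [ArithmeticFunction.IsMultiplicative.iff_ne_zero]
    constructor
    · rw [hFapply 1 one_ne_zero, hf1]
    · intro m n hm hn hmn
      rw [hFapply _ (Nat.mul_ne_zero hm hn), hFapply _ hm, hFapply _ hn]
      exact hmult m n (Nat.pos_of_ne_zero hm) (Nat.pos_of_ne_zero hn) hmn
  have hHmult : H.IsMultiplicative := by
    rw [ArithmeticFunction.IsMultiplicative.iff_ne_zero]
    constructor
    · rw [hHapply 1, Hfun_one]
    · intro m n hm hn hmn
      rw [hHapply, hHapply, hHapply, Hfun, Hfun, Hfun,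
        if_neg (Nat.mul_ne_zero hm hn), if_neg hm, if_neg hn,
        Nat.factorization_mul hm hn]
      apply Finsupp.prod_add_index_of_disjoint
      simpa using Nat.Coprime.disjoint_primeFactors hmn
  -- F * H = 1
  have hFH : F * H = 1 := by
    rw [ArithmeticFunction.IsMultiplicative.eq_iff_eq_on_prime_powers _
      (hFmult.mul hHmult) _ ArithmeticFunction.isMultiplicative_one]
    intro p k hp
    rw [ArithmeticFunction.mul_apply, ArithmeticFunction.one_apply,
      Nat.sum_divisorsAntidiagonal' (f := fun a b => F a * H b),
      Nat.sum_divisors_prime_pow hp]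
    have hterm : ∀ x ∈ Finset.range (k+1),
        F (p ^ k / p ^ x) * H (p ^ x) = f (p ^ (k - x)) * hpw f p x := by
      intro x hx
      rw [Finset.mem_range] at hx
      rw [Nat.pow_div (by omega) hp.pos, hFapply _ (pow_ne_zero _ hp.ne_zero),
        hHapply, Hfun_prime_pow hp]
    rw [Finset.sum_congr rfl hterm]
    match k with
    | 0 => simp [hpw_zero, hf1]
    | (m+1) =>
      have hne : p ^ (m+1) ≠ 1 := by
        have h1p : 1 < p ^ (m+1) := by
          calc 1 < p := hp.one_lt
            _ = p ^ 1 := (pow_one p).symm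
            _ ≤ p ^ (m+1) := Nat.pow_le_pow_right hp.pos (by omega)
        exact Nat.ne_of_gt h1p
      rw [if_neg hne, Finset.sum_range_succ]
      rw [hpw_succ]
      simp [hf1]
  -- the convolution identity for Hfun
  have hconv : ∀ n : ℕ, 0 < n →
      ∑ d ∈ n.divisors, f (n / d) * Hfun f d = if n = 1 then 1 else 0 := by
    intro n hn
    have h1 : (F * H) n = if n = 1 then 1 else 0 := by
      rw [hFH, ArithmeticFunction.one_apply]
    rw [ArithmeticFunction.mul_apply,
      Nat.sum_divisorsAntidiagonal' (f := fun a b => F a * H b)] at h1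
    rw [← h1]
    apply Finset.sum_congr rfl
    intro d hd
    rw [Nat.mem_divisors] at hd
    have hd0 : n / d ≠ 0 := by
      have := Nat.div_pos (Nat.le_of_dvd hn hd.1) (Nat.pos_of_dvd_of_pos hd.1 hn)
      omega
    rw [hFapply _ hd0, hHapply]
  -- uniqueness : g = Hfun on positives
  have huniq : ∀ n : ℕ, 0 < n → g n = Hfun f n := by
    intro n
    induction n using Nat.strong_induction_on with
    | _ n ih =>
      intro hn
      have h1 := hginv n hn
      have h2 := hconv n hn
      rw [← Nat.cons_self_properDivisors hn.ne', Finset.sum_cons,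
        Nat.div_self hn, hf1, one_mul] at h1 h2
      have hS : ∑ d ∈ n.properDivisors, f (n / d) * g d
          = ∑ d ∈ n.properDivisors, f (n / d) * Hfun f d := by
        apply Finset.sum_congr rfl
        intro d hd
        rw [ih d (Nat.mem_properDivisors.mp hd).2 (Nat.pos_of_mem_properDivisors hd)]
      rw [hS] at h1
      linarith [h1, h2]
  -- final bound
  intro n hn
  have hn0 : n ≠ 0 := by omega
  rw [huniq n (by omega), Hfun, if_neg hn0, Finsupp.prod]
  have hbound : ∀ p ∈ n.factorization.support,
      |hpw f p (n.factorization p)| ≤ ((p:ℝ) ^ β) ^ (n.factorization p) := by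
    intro p hp
    have hpp : p.Prime := Nat.prime_of_mem_primeFactors (by simpa using hp)
    exact hpw_bound f hA hc0 hc1 hf hpp _
  calc |∏ p ∈ n.factorization.support, hpw f p (n.factorization p)|
      ≤ ∏ p ∈ n.factorization.support, |hpw f p (n.factorization p)| :=
        le_of_eq (Finset.abs_prod _ _)
    _ ≤ ∏ p ∈ n.factorization.support, ((p:ℝ) ^ β) ^ (n.factorization p) :=
        Finset.prod_le_prod (fun p _ => abs_nonneg _) hbound
    _ = ∏ p ∈ n.factorization.support, (((p:ℝ) ^ (n.factorization p) : ℝ)) ^ β := by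
        apply Finset.prod_congr rfl
        intro p hp
        have hq0 : (0:ℝ) < (p:ℝ) := by
          have hpp : p.Prime := Nat.prime_of_mem_primeFactors (by simpa using hp)
          exact_mod_cast hpp.pos
        rw [← Real.rpow_natCast ((p:ℝ) ^ β) (n.factorization p),
          ← Real.rpow_natCast (p:ℝ) (n.factorization p),
          ← Real.rpow_mul (le_of_lt hq0), ← Real.rpow_mul (le_of_lt hq0), mul_comm]
    _ = (↑(∏ p ∈ n.factorization.support, p ^ (n.factorization p)) : ℝ) ^ β := by
        rw [Real.finset_prod_rpow _ _ (fun p _ => by positivity), Nat.cast_prod]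
        norm_num
    _ = (n : ℝ) ^ β := by
        congr 1
        exact_mod_cast congrArg (Nat.cast (R := ℝ))
          (Nat.factorization_prod_pow_eq_self hn0)
end

section
/- Let f : ℕ → ℝ be an arithmetic function with f(1) = 1. Assume there exist C > 0 and γ ∈ ℝ such that |f(n)| ≤ C n^γ for all n ≥ 2, and let ς > 1 be the real number satisfying ζ(ς) = 1/C + 1, where ζ is the Riemann zeta function. Then for all n ≥ 2, the Dirichlet inverse satisfies |f⁻¹(n)| ≤ n^{γ+ς}. -/
theorem stmt12 (f g : ℕ → ℝ) (hf1 : f 1 = 1)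
    (hginv : ∀ n : ℕ, 0 < n →
      ∑ d ∈ n.divisors, f (n / d) * g d = if n = 1 then 1 else 0)
    (C : ℝ) (hC : 0 < C) (γ : ℝ)
    (hf : ∀ n : ℕ, 2 ≤ n → |f n| ≤ C * (n : ℝ) ^ γ)
    (ς : ℝ) (hς : 1 < ς) (hzeta : ∑' m : ℕ, (m : ℝ) ^ (-ς) = 1 / C + 1) :
    ∀ n : ℕ, 2 ≤ n → |g n| ≤ (n : ℝ) ^ (γ + ς) := by
  have hg1 : g 1 = 1 := by
    have h := hginv 1 one_pos
    simp [hf1] at h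
    exact h
  intro n
  induction n using Nat.strong_induction_on with
  | _ n IH =>
    intro hn
    have hn0 : (0 : ℝ) < n := by positivity
    -- the convolution identity at n, split off d = n
    have hsplit : g n = -∑ d ∈ n.properDivisors, f (n / d) * g d := by
      have h := hginv n (by omega)
      rw [if_neg (by omega), ← Nat.insert_self_properDivisors (by omega : n ≠ 0),
        Finset.sum_insert Nat.self_notMem_properDivisors,
        Nat.div_self (by omega : 0 < n), hf1, one_mul] at h
      linarith
    -- facts about proper divisors
    have hdfacts : ∀ d ∈ n.properDivisors, 0 < d ∧ 2 ≤ n / d ∧ n / d * d = n := by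
      intro d hd
      rw [Nat.mem_properDivisors] at hd
      have hd0 : 0 < d := Nat.pos_of_dvd_of_pos hd.1 (by omega)
      have hdm : n / d * d = n := Nat.div_mul_cancel hd.1
      refine ⟨hd0, ?_, hdm⟩
      rcases Nat.lt_or_ge (n / d) 2 with h | h
      · interval_cases h' : n / d <;> omega
      · exact h
    -- termwise bound
    have hterm : ∀ d ∈ n.properDivisors,
        |f (n / d) * g d| ≤ C * (n : ℝ) ^ γ * (d : ℝ) ^ ς := by
      intro d hd
      obtain ⟨hd0, hnd2, hdm⟩ := hdfacts d hd
      have hdlt : d < n := (Nat.mem_properDivisors.mp hd).2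
      have hgd : |g d| ≤ (d : ℝ) ^ (γ + ς) := by
        rcases eq_or_lt_of_le (Nat.one_le_iff_ne_zero.mpr (by omega) : 1 ≤ d) with h1 | h1
        · rw [← h1]; simp [hg1]
        · exact IH d hdlt (by omega)
      have hfd : |f (n / d)| ≤ C * ((n / d : ℕ) : ℝ) ^ γ := hf _ hnd2
      calc |f (n / d) * g d| = |f (n / d)| * |g d| := abs_mul _ _
        _ ≤ (C * ((n / d : ℕ) : ℝ) ^ γ) * ((d : ℝ) ^ (γ + ς)) := by
            apply mul_le_mul hfd hgd (abs_nonneg _)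
            positivity
        _ = C * (n : ℝ) ^ γ * (d : ℝ) ^ ς := by
            have hd0' : (0 : ℝ) < (d : ℝ) := by exact_mod_cast hd0
            rw [Real.rpow_add hd0', ← mul_assoc, mul_assoc C,
              ← Real.mul_rpow (by positivity) (by positivity)]
            rw [show ((n / d : ℕ) : ℝ) * (d : ℝ) = ((n / d * d : ℕ) : ℝ) by push_cast; ring,
              hdm]
    -- sum bound on d^ς over proper divisors
    have hsum : ∑ d ∈ n.properDivisors, (d : ℝ) ^ ς ≤ (n : ℝ) ^ ς * (1 / C) := by
      have hre : ∀ d ∈ n.properDivisors,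
          (d : ℝ) ^ ς = (n : ℝ) ^ ς * ((n / d : ℕ) : ℝ) ^ (-ς) := by
        intro d hd
        obtain ⟨hd0, hnd2, hdm⟩ := hdfacts d hd
        have hnd0 : (0 : ℝ) < ((n / d : ℕ) : ℝ) := by positivity
        have : (d : ℝ) = (n : ℝ) / ((n / d : ℕ) : ℝ) := by
          field_simp
          rw [mul_comm]
          exact_mod_cast hdm
        rw [this, Real.div_rpow (le_of_lt hn0) (le_of_lt hnd0),
          Real.rpow_neg (le_of_lt hnd0), div_eq_mul_inv]
      rw [Finset.sum_congr rfl hre, ← Finset.mul_sum]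
      apply mul_le_mul_of_nonneg_left _ (by positivity)
      -- ∑_{d ∈ pD} (n/d)^(-ς) ≤ 1/C
      have hsummable : Summable (fun m : ℕ => (m : ℝ) ^ (-ς)) :=
        Real.summable_nat_rpow.mpr (by linarith)
      have hdiv : ∑ d ∈ n.divisors, ((n / d : ℕ) : ℝ) ^ (-ς)
          = ∑ d ∈ n.properDivisors, ((n / d : ℕ) : ℝ) ^ (-ς) + 1 := by
        rw [← Nat.insert_self_properDivisors (by omega : n ≠ 0),
          Finset.sum_insert Nat.self_notMem_properDivisors,
          Nat.div_self (by omega : 0 < n)]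
        simp [Real.one_rpow]
        ring
      have hle : ∑ d ∈ n.divisors, ((n / d : ℕ) : ℝ) ^ (-ς) ≤ 1 / C + 1 := by
        rw [Nat.sum_div_divisors n (fun d => (d : ℝ) ^ (-ς)), ← hzeta]
        exact Summable.sum_le_tsum _ (fun i _ => by positivity) hsummable
      linarith [hdiv ▸ hle]
    -- conclude
    calc |g n| = |∑ d ∈ n.properDivisors, f (n / d) * g d| := by rw [hsplit, abs_neg]
      _ ≤ ∑ d ∈ n.properDivisors, |f (n / d) * g d| := Finset.abs_sum_le_sum_abs _ _
      _ ≤ ∑ d ∈ n.properDivisors, C * (n : ℝ) ^ γ * (d : ℝ) ^ ς :=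
          Finset.sum_le_sum hterm
      _ = C * (n : ℝ) ^ γ * ∑ d ∈ n.properDivisors, (d : ℝ) ^ ς := by
          rw [Finset.mul_sum]
      _ ≤ C * (n : ℝ) ^ γ * ((n : ℝ) ^ ς * (1 / C)) := by
          apply mul_le_mul_of_nonneg_left hsum (by positivity)
      _ = (n : ℝ) ^ (γ + ς) := by
          rw [Real.rpow_add hn0]
          field_simp
end

section
/- Let n ≥ 1 and k ≥ 1 be integers, and let d_1, …, d_k be integers with each d_i ≥ 2 and d_1⋯d_k = n. Then d_1 + ⋯ + d_k ≤ 2(k−1) + n/2^{k−1}. -/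
lemma pow_le_prod_aux (l : List ℕ) (h : ∀ x ∈ l, 2 ≤ x) :
    2 ^ l.length ≤ l.prod := by
  induction l with
  | nil => simp
  | cons a t ih =>
    simp only [List.length_cons, List.prod_cons, pow_succ]
    rw [mul_comm]
    exact Nat.mul_le_mul (h a (by simp)) (ih fun x hx => h x (by simp [hx]))

lemma sum_le_aux (l : List ℕ) (h2 : ∀ x ∈ l, 2 ≤ x) (hne : l ≠ []) :
    (l.sum : ℝ) ≤ 2 * ((l.length : ℝ) - 1) + (l.prod : ℝ) / 2 ^ (l.length - 1) := by
  induction l with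
  | nil => exact absurd rfl hne
  | cons a t ih =>
    have ha : (2 : ℝ) ≤ (a : ℝ) := by exact_mod_cast h2 a (by simp)
    rcases t.eq_nil_or_concat with rfl | hne'
    · simp
    have htne : t ≠ [] := by rcases hne' with ⟨l', b, rfl⟩; simp
    have ih' := ih (fun x hx => h2 x (by simp [hx])) htne
    obtain ⟨e, he⟩ : ∃ e, t.length = e + 1 :=
      ⟨t.length - 1, (Nat.succ_pred_eq_of_pos (List.length_pos_iff.mpr htne)).symm⟩
    have hP : (2 : ℝ) * 2 ^ e ≤ (t.prod : ℝ) := by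
      have := pow_le_prod_aux t (fun x hx => h2 x (by simp [hx]))
      rw [he] at this
      calc (2 : ℝ) * 2 ^ e = 2 ^ (e + 1) := by ring
        _ ≤ (t.prod : ℝ) := by exact_mod_cast this
    have hpow : (0 : ℝ) < 2 ^ e := by positivity
    rw [he, Nat.add_sub_cancel] at ih'
    have hel : ((e + 1 : ℕ) : ℝ) - 1 = (e : ℝ) := by push_cast; ring
    rw [hel] at ih'
    have hlen1 : (a :: t).length - 1 = e + 1 := by simp [he]
    have hlen2 : (((a :: t).length : ℝ)) - 1 = (e : ℝ) + 1 := by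
      rw [List.length_cons, he]; push_cast; ring
    rw [List.sum_cons, List.prod_cons, Nat.cast_add, Nat.cast_mul, hlen1, hlen2]
    set q : ℝ := (t.prod : ℝ) / 2 ^ e with hqdef
    have hq : (2 : ℝ) ≤ q := (le_div_iff₀ hpow).mpr (by linarith)
    have hPq : (t.prod : ℝ) = q * 2 ^ e := (div_mul_cancel₀ _ (ne_of_gt hpow)).symm
    have hrw : (a : ℝ) * (t.prod : ℝ) / 2 ^ (e + 1) = (a : ℝ) * q / 2 := by
      rw [hPq, pow_succ]
      field_simp
    rw [hrw]
    have key : (a : ℝ) + q ≤ 2 + (a : ℝ) * q / 2 := by nlinarith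
    linarith

theorem stmt14 (n k : ℕ) (hn : 1 ≤ n) (hk : 1 ≤ k) (d : Fin k → ℕ)
    (hd : ∀ i, 2 ≤ d i) (hprod : ∏ i, d i = n) :
    ∑ i, (d i : ℝ) ≤ 2 * ((k : ℝ) - 1) + (n : ℝ) / 2 ^ (k - 1) := by
  have hl := sum_le_aux (List.ofFn d) (by
      intro x hx
      rw [List.mem_ofFn] at hx
      obtain ⟨i, rfl⟩ := hx
      exact hd i)
    (by
      intro h
      have := congrArg List.length h
      simp at this
      omega)
  rw [List.sum_ofFn, List.prod_ofFn, List.length_ofFn] at hl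
  rw [hprod] at hl
  calc ∑ i, (d i : ℝ) = ((∑ i, d i : ℕ) : ℝ) := by push_cast; rfl
    _ ≤ _ := hl
end

section
/- Let f : ℕ → ℝ be an arithmetic function with f(1) = 1. Assume there exist A > 0 and c ∈ (0,1) such that |f(n)| ≤ A c^n for all n ≥ 2, and let ς > 1 be the real number satisfying ζ(ς) = 1/A + 1, where ζ is the Riemann zeta function. Then for all n ≥ 2, the Dirichlet inverse satisfies |f⁻¹(n)| ≤ Ω(n) · A · n^{ς + e·ln c} / 2^ς ≤ A · n^{ς + e·ln c} · ln n / (2^ς · ln 2). -/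
open Real Finset

private lemma list_two_pow_le : ∀ l : List ℕ, (∀ p ∈ l, 2 ≤ p) → 2 ^ l.length ≤ l.prod := by
  intro l
  induction l with
  | nil => simp
  | cons a t ih =>
    intro h
    rw [List.length_cons, List.prod_cons, pow_succ, mul_comm]
    exact Nat.mul_le_mul (h a List.mem_cons_self)
      (ih fun p hp => h p (List.mem_cons_of_mem _ hp))

private lemma e_log_le (x : ℝ) (hx : 1 ≤ x) : Real.exp 1 * Real.log x ≤ x := by
  have he : (0:ℝ) < Real.exp 1 := Real.exp_pos 1
  have hx0 : 0 < x := lt_of_lt_of_le one_pos hx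
  have h1 : Real.log (x / Real.exp 1) ≤ x / Real.exp 1 - 1 :=
    Real.log_le_sub_one_of_pos (by positivity)
  have h2 : Real.log (x / Real.exp 1) = Real.log x - 1 := by
    rw [Real.log_div hx0.ne' he.ne', Real.log_exp]
  have h3 : Real.log x ≤ x / Real.exp 1 := by linarith
  have h4 := mul_le_mul_of_nonneg_left h3 he.le
  rwa [mul_div_cancel₀ x he.ne'] at h4

private lemma pow_le_rpow_elc (c : ℝ) (hc0 : 0 < c) (hc1 : c < 1) (m : ℕ) (hm : 1 ≤ m) :
    c ^ m ≤ (m : ℝ) ^ (Real.exp 1 * Real.log c) := by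
  have hm1 : (1:ℝ) ≤ m := by exact_mod_cast hm
  have hm0 : (0:ℝ) < m := by linarith
  rw [← Real.rpow_natCast c m, Real.rpow_def_of_pos hc0, Real.rpow_def_of_pos hm0]
  apply Real.exp_le_exp.2
  have hlc : Real.log c < 0 := Real.log_neg hc0 hc1
  have h1 : Real.exp 1 * Real.log (m : ℝ) ≤ m := e_log_le m hm1
  nlinarith [mul_nonneg (neg_nonneg.2 hlc.le) (sub_nonneg.2 h1)]

private lemma omega_pos {m : ℕ} (hm : 2 ≤ m) : 1 ≤ m.primeFactorsList.length := by
  obtain ⟨p, hp, hpd⟩ := Nat.exists_prime_and_dvd (n := m) (by omega)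
  have : p ∈ m.primeFactorsList := (Nat.mem_primeFactorsList (by omega)).2 ⟨hp, hpd⟩
  exact List.length_pos_iff.2 (List.ne_nil_of_mem this)

private lemma omega_add {d m : ℕ} (hd : d ≠ 0) (hm : m ≠ 0) :
    (d * m).primeFactorsList.length = d.primeFactorsList.length + m.primeFactorsList.length := by
  have := ArithmeticFunction.cardFactors_mul hd hm
  simpa [ArithmeticFunction.cardFactors_apply] using this

set_option maxHeartbeats 1000000 in
theorem stmt15 (f g : ℕ → ℝ) (hf1 : f 1 = 1)
    (hginv : ∀ n : ℕ, 0 < n →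
      ∑ d ∈ n.divisors, f (n / d) * g d = if n = 1 then 1 else 0)
    (A c : ℝ) (hA : 0 < A) (hc0 : 0 < c) (hc1 : c < 1)
    (hf : ∀ n : ℕ, 2 ≤ n → |f n| ≤ A * c ^ n)
    (ς : ℝ) (hς : 1 < ς) (hzeta : ∑' m : ℕ, (m : ℝ) ^ (-ς) = 1 / A + 1) :
    ∀ n : ℕ, 2 ≤ n →
      |g n| ≤ (n.primeFactorsList.length : ℝ) * A *
          (n : ℝ) ^ (ς + Real.exp 1 * Real.log c) / (2 : ℝ) ^ ς ∧
      (n.primeFactorsList.length : ℝ) * A *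
          (n : ℝ) ^ (ς + Real.exp 1 * Real.log c) / (2 : ℝ) ^ ς ≤
        A * (n : ℝ) ^ (ς + Real.exp 1 * Real.log c) * Real.log n /
          ((2 : ℝ) ^ ς * Real.log 2) := by
  have hg1 : g 1 = 1 := by
    have h := hginv 1 one_pos
    simpa [Nat.divisors_one, hf1] using h
  have h2ς : (0:ℝ) < (2:ℝ) ^ ς := Real.rpow_pos_of_pos two_pos ς
  -- summability and tail sum
  have hsum : Summable (fun m : ℕ => (m : ℝ) ^ (-ς)) :=
    Real.summable_nat_rpow.2 (by linarith)
  have hsum' : Summable (fun m : ℕ => if m = 1 then 0 else (m : ℝ) ^ (-ς)) := by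
    apply Summable.of_nonneg_of_le _ _ hsum
    · intro m; split <;> positivity
    · intro m; split
      · positivity
      · exact le_rfl
  have htail : ∑' m : ℕ, (if m = 1 then (0:ℝ) else (m : ℝ) ^ (-ς)) = 1 / A := by
    have h := Summable.tsum_eq_add_tsum_ite hsum 1
    rw [hzeta] at h
    rw [Nat.cast_one, Real.one_rpow] at h
    linarith
  have hS : ∀ S : Finset ℕ, (∀ m ∈ S, 2 ≤ m) → ∑ m ∈ S, (m : ℝ) ^ (-ς) ≤ 1 / A := by
    intro S h2
    have heq : ∑ m ∈ S, (m : ℝ) ^ (-ς)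
        = ∑ m ∈ S, (if m = 1 then (0:ℝ) else (m : ℝ) ^ (-ς)) := by
      apply Finset.sum_congr rfl
      intro m hm
      rw [if_neg (by have := h2 m hm; omega)]
    rw [heq, ← htail]
    apply Summable.sum_le_tsum S _ hsum'
    intro m _
    split <;> positivity
  set σ' : ℝ := ς + Real.exp 1 * Real.log c with hσ'
  -- main bound by strong induction
  have key : ∀ n : ℕ, 2 ≤ n →
      |g n| ≤ (n.primeFactorsList.length : ℝ) * A * (n : ℝ) ^ σ' / (2:ℝ) ^ ς := by
    intro n
    induction n using Nat.strong_induction_on with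
    | _ n ih =>
    intro hn
    have hn0 : 0 < n := by omega
    have hnR : (0:ℝ) < n := by exact_mod_cast hn0
    have hn2R : (2:ℝ) ≤ n := by exact_mod_cast hn
    set L : ℝ := (n.primeFactorsList.length : ℝ) with hL
    have hL1 : (1:ℝ) ≤ L := by rw [hL]; exact_mod_cast omega_pos hn
    have hnσ : (0:ℝ) < (n:ℝ) ^ σ' := Real.rpow_pos_of_pos hnR σ'
    have hnelc : (0:ℝ) < (n:ℝ) ^ (Real.exp 1 * Real.log c) :=
      Real.rpow_pos_of_pos hnR _
    -- convolution identity
    have h0 : ∑ d ∈ n.divisors, f (n / d) * g d = 0 := by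
      rw [hginv n hn0, if_neg (by omega)]
    have hnn : n ∈ n.divisors := Nat.mem_divisors_self n hn0.ne'
    have hpull := Finset.sum_erase_add n.divisors (fun d => f (n / d) * g d) hnn
    rw [h0] at hpull
    simp only [Nat.div_self hn0, hf1, one_mul] at hpull
    have hgn : g n = -∑ d ∈ n.divisors.erase n, f (n / d) * g d := by linarith
    have h1mem : (1:ℕ) ∈ n.divisors.erase n := by
      rw [Finset.mem_erase, Nat.mem_divisors]
      exact ⟨by omega, one_dvd n, hn0.ne'⟩
    set S := (n.divisors.erase n).erase 1 with hSdef
    have hpull2 := Finset.sum_erase_add (n.divisors.erase n) (fun d => f (n / d) * g d) h1mem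
    simp only [Nat.div_one, hg1, mul_one] at hpull2
    -- facts about elements of S
    have hmemS : ∀ d ∈ S, d ∣ n ∧ 2 ≤ d ∧ d < n := by
      intro d hd
      rw [hSdef, Finset.mem_erase, Finset.mem_erase, Nat.mem_divisors] at hd
      obtain ⟨hd1, hdn, hdvd, -⟩ := hd
      refine ⟨hdvd, ?_, ?_⟩
      · have := Nat.pos_of_dvd_of_pos hdvd hn0
        omega
      · exact lt_of_le_of_ne (Nat.le_of_dvd hn0 hdvd) hdn
    -- termwise bound on S
    have hterm : ∀ d ∈ S, |f (n / d) * g d| ≤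
        (L - 1) * A ^ 2 * (n:ℝ) ^ (Real.exp 1 * Real.log c) * (d:ℝ) ^ ς / (2:ℝ) ^ ς := by
      intro d hd
      obtain ⟨hdvd, hd2, hdlt⟩ := hmemS d hd
      have hdm : d * (n / d) = n := Nat.mul_div_cancel' hdvd
      have hm2 : 2 ≤ n / d := by
        rcases Nat.lt_or_ge (n / d) 2 with h | h
        · exfalso
          have h01 : n / d = 0 ∨ n / d = 1 := Nat.le_one_iff_eq_zero_or_eq_one.mp (Nat.lt_succ_iff.mp h)
          rcases h01 with h' | h'
          · rw [h', Nat.mul_zero] at hdm; omega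
          · rw [h', Nat.mul_one] at hdm; omega
        · exact h
      have hmdvd : n / d ∣ n := Nat.div_dvd_of_dvd hdvd
      have hdR : (0:ℝ) < d := by exact_mod_cast (by omega : 0 < d)
      have hmR : (0:ℝ) < (n / d : ℕ) := by exact_mod_cast (by omega : 0 < n / d)
      -- |f (n/d)| bound
      have hf1' : |f (n / d)| ≤ A * ((n / d : ℕ) : ℝ) ^ (Real.exp 1 * Real.log c) := by
        refine (hf _ hm2).trans ?_
        have := pow_le_rpow_elc c hc0 hc1 (n / d) (by omega)
        nlinarith
      -- |g d| bound by induction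
      have hg' : |g d| ≤ (d.primeFactorsList.length : ℝ) * A * (d:ℝ) ^ σ' / (2:ℝ) ^ ς :=
        ih d hdlt hd2
      -- Ω d ≤ Ω n - 1
      have hΩ : (d.primeFactorsList.length : ℝ) ≤ L - 1 := by
        have hadd : n.primeFactorsList.length =
            d.primeFactorsList.length + (n / d).primeFactorsList.length := by
          conv_lhs => rw [← hdm]
          exact omega_add (by omega) (by omega)
        have h1 : 1 ≤ (n / d).primeFactorsList.length := omega_pos hm2
        rw [hL]
        push_cast [hadd]
        have : (1:ℝ) ≤ ((n / d).primeFactorsList.length : ℝ) := by exact_mod_cast h1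
        linarith
      -- combine
      have hdσ : (0:ℝ) < (d:ℝ) ^ σ' := Real.rpow_pos_of_pos hdR σ'
      have hgd_nonneg : (0:ℝ) ≤ |g d| := abs_nonneg _
      have hfd_nonneg : (0:ℝ) ≤ |f (n / d)| := abs_nonneg _
      rw [abs_mul]
      have step1 : |f (n / d)| * |g d| ≤
          (A * ((n / d : ℕ) : ℝ) ^ (Real.exp 1 * Real.log c)) *
            ((L - 1) * A * (d:ℝ) ^ σ' / (2:ℝ) ^ ς) := by
        have hg'' : |g d| ≤ (L - 1) * A * (d:ℝ) ^ σ' / (2:ℝ) ^ ς := by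
          refine hg'.trans ?_
          gcongr
        apply mul_le_mul hf1' hg'' hgd_nonneg (by positivity)
      refine step1.trans (le_of_eq ?_)
      -- rearrange: (n/d)^elc * d^σ' = n^elc * d^ς
      have hsplit : (d:ℝ) ^ σ' = (d:ℝ) ^ ς * (d:ℝ) ^ (Real.exp 1 * Real.log c) := by
        rw [hσ', Real.rpow_add hdR]
      have hmul : ((n / d : ℕ) : ℝ) ^ (Real.exp 1 * Real.log c) *
          (d:ℝ) ^ (Real.exp 1 * Real.log c) = (n:ℝ) ^ (Real.exp 1 * Real.log c) := by
        rw [← Real.mul_rpow hmR.le hdR.le]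
        congr 1
        rw [← Nat.cast_mul, Nat.div_mul_cancel hdvd]
      have hre : A * ((n / d : ℕ) : ℝ) ^ (Real.exp 1 * Real.log c) *
          ((L - 1) * A * ((d:ℝ) ^ ς * (d:ℝ) ^ (Real.exp 1 * Real.log c)) / (2:ℝ) ^ ς) =
          (L - 1) * A ^ 2 * (((n / d : ℕ) : ℝ) ^ (Real.exp 1 * Real.log c) *
            (d:ℝ) ^ (Real.exp 1 * Real.log c)) * (d:ℝ) ^ ς / (2:ℝ) ^ ς := by
        ring
      rw [hsplit, hre, hmul]
    -- sum over S of d^ς via bijection d ↦ n/d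
    have hbij : ∑ d ∈ S, (d:ℝ) ^ ς = ∑ m ∈ S, (n:ℝ) ^ ς * (m:ℝ) ^ (-ς) := by
      apply Finset.sum_nbij' (i := fun d => n / d) (j := fun m => n / m)
      · intro a ha
        obtain ⟨hdvd, hd2, hdlt⟩ := hmemS a ha
        rw [hSdef, Finset.mem_erase, Finset.mem_erase, Nat.mem_divisors]
        refine ⟨?_, ?_, Nat.div_dvd_of_dvd hdvd, hn0.ne'⟩
        · intro hcon
          have := Nat.mul_div_cancel' hdvd
          rw [hcon] at this
          nlinarith
        · intro hcon
          have := Nat.mul_div_cancel' hdvd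
          rw [hcon] at this
          nlinarith
      · intro a ha
        obtain ⟨hdvd, hd2, hdlt⟩ := hmemS a ha
        rw [hSdef, Finset.mem_erase, Finset.mem_erase, Nat.mem_divisors]
        refine ⟨?_, ?_, Nat.div_dvd_of_dvd hdvd, hn0.ne'⟩
        · intro hcon
          have := Nat.mul_div_cancel' hdvd
          rw [hcon] at this
          nlinarith
        · intro hcon
          have := Nat.mul_div_cancel' hdvd
          rw [hcon] at this
          nlinarith
      · intro a ha
        exact Nat.div_div_self (hmemS a ha).1 hn0.ne'
      · intro a ha
        exact Nat.div_div_self (hmemS a ha).1 hn0.ne'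
      · intro a ha
        obtain ⟨hdvd, hd2, hdlt⟩ := hmemS a ha
        have haR : (0:ℝ) < a := by exact_mod_cast (by omega : 0 < a)
        have hmR : (0:ℝ) < ((n / a : ℕ) : ℝ) := by
          have : 0 < n / a := Nat.div_pos (Nat.le_of_dvd hn0 hdvd) (by omega)
          exact_mod_cast this
        have hprod : (a:ℝ) * ((n / a : ℕ) : ℝ) = n := by
          rw [← Nat.cast_mul]
          exact_mod_cast congrArg Nat.cast (Nat.mul_div_cancel' hdvd)
        rw [Real.rpow_neg hmR.le, ← hprod, Real.mul_rpow haR.le hmR.le]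
        field_simp
    have hsumS : ∑ d ∈ S, (d:ℝ) ^ ς ≤ (n:ℝ) ^ ς * (1 / A) := by
      rw [hbij, ← Finset.mul_sum]
      apply mul_le_mul_of_nonneg_left _ (Real.rpow_pos_of_pos hnR ς).le
      exact hS S (fun m hm => (hmemS m hm).2.1)
    -- assemble
    have habs : |g n| ≤ |f n| + ∑ d ∈ S, |f (n / d) * g d| := by
      rw [hgn, abs_neg]
      calc |∑ d ∈ n.divisors.erase n, f (n / d) * g d|
          ≤ ∑ d ∈ n.divisors.erase n, |f (n / d) * g d| := Finset.abs_sum_le_sum_abs _ _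
        _ = ∑ d ∈ S, |f (n / d) * g d| + |f n| := by
            have := Finset.sum_erase_add (n.divisors.erase n)
              (fun d => |f (n / d) * g d|) h1mem
            simp only [Nat.div_one, hg1, mul_one] at this
            linarith [this]
        _ = |f n| + ∑ d ∈ S, |f (n / d) * g d| := by ring
    have hfn : |f n| ≤ A * (n:ℝ) ^ σ' / (2:ℝ) ^ ς := by
      refine (hf n hn).trans ?_
      have h1 : c ^ n ≤ (n:ℝ) ^ (Real.exp 1 * Real.log c) :=
        pow_le_rpow_elc c hc0 hc1 n (by omega)
      have h2 : (2:ℝ) ^ ς ≤ (n:ℝ) ^ ς :=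
        Real.rpow_le_rpow (by norm_num) hn2R (by linarith)
      have h3 : (n:ℝ) ^ σ' = (n:ℝ) ^ ς * (n:ℝ) ^ (Real.exp 1 * Real.log c) := by
        rw [hσ', Real.rpow_add hnR]
      have h4 : A * c ^ n ≤ A * (n:ℝ) ^ (Real.exp 1 * Real.log c) :=
        mul_le_mul_of_nonneg_left h1 hA.le
      have h5 : (1:ℝ) ≤ (n:ℝ) ^ ς / (2:ℝ) ^ ς := (one_le_div h2ς).2 h2
      calc A * c ^ n ≤ A * (n:ℝ) ^ (Real.exp 1 * Real.log c) := h4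
        _ ≤ A * (n:ℝ) ^ (Real.exp 1 * Real.log c) * ((n:ℝ) ^ ς / (2:ℝ) ^ ς) := by
            nlinarith [mul_pos hA hnelc]
        _ = A * (n:ℝ) ^ σ' / (2:ℝ) ^ ς := by rw [h3]; ring
    have hsum2 : ∑ d ∈ S, |f (n / d) * g d| ≤ (L - 1) * A * (n:ℝ) ^ σ' / (2:ℝ) ^ ς := by
      calc ∑ d ∈ S, |f (n / d) * g d|
          ≤ ∑ d ∈ S, (L - 1) * A ^ 2 * (n:ℝ) ^ (Real.exp 1 * Real.log c) * (d:ℝ) ^ ς / (2:ℝ) ^ ς :=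
            Finset.sum_le_sum hterm
        _ = (L - 1) * A ^ 2 * (n:ℝ) ^ (Real.exp 1 * Real.log c) / (2:ℝ) ^ ς *
              ∑ d ∈ S, (d:ℝ) ^ ς := by
            rw [Finset.mul_sum]
            apply Finset.sum_congr rfl
            intro d _
            ring
        _ ≤ (L - 1) * A ^ 2 * (n:ℝ) ^ (Real.exp 1 * Real.log c) / (2:ℝ) ^ ς *
              ((n:ℝ) ^ ς * (1 / A)) := by
            apply mul_le_mul_of_nonneg_left hsumS
            exact div_nonneg (mul_nonneg (mul_nonneg (by linarith) (by positivity))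
              hnelc.le) h2ς.le
        _ = (L - 1) * A * (n:ℝ) ^ σ' / (2:ℝ) ^ ς := by
            have h3 : (n:ℝ) ^ σ' = (n:ℝ) ^ ς * (n:ℝ) ^ (Real.exp 1 * Real.log c) := by
              rw [hσ', Real.rpow_add hnR]
            rw [h3]
            field_simp
    calc |g n| ≤ |f n| + ∑ d ∈ S, |f (n / d) * g d| := habs
      _ ≤ A * (n:ℝ) ^ σ' / (2:ℝ) ^ ς + (L - 1) * A * (n:ℝ) ^ σ' / (2:ℝ) ^ ς :=
          add_le_add hfn hsum2
      _ = L * A * (n:ℝ) ^ σ' / (2:ℝ) ^ ς := by ring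
  -- conclude
  intro n hn
  have hn0 : 0 < n := by omega
  have hnR : (0:ℝ) < n := by exact_mod_cast hn0
  have hnσ : (0:ℝ) < (n:ℝ) ^ σ' := Real.rpow_pos_of_pos hnR σ'
  refine ⟨key n hn, ?_⟩
  have hlen : (n.primeFactorsList.length : ℝ) * Real.log 2 ≤ Real.log n := by
    have h2n : (2:ℕ) ^ n.primeFactorsList.length ≤ n := by
      calc (2:ℕ) ^ n.primeFactorsList.length ≤ n.primeFactorsList.prod :=
            list_two_pow_le _ (fun p hp => (Nat.prime_of_mem_primeFactorsList hp).two_le)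
        _ = n := Nat.prod_primeFactorsList hn0.ne'
    have h2nR : (2:ℝ) ^ n.primeFactorsList.length ≤ (n:ℝ) := by exact_mod_cast h2n
    have := Real.log_le_log (by positivity) h2nR
    rwa [Real.log_pow] at this
  have hlog2 : (0:ℝ) < Real.log 2 := Real.log_pos (by norm_num)
  rw [div_le_div_iff₀ h2ς (by positivity)]
  nlinarith [mul_le_mul_of_nonneg_left hlen
    (by positivity : (0:ℝ) ≤ A * (n:ℝ) ^ σ' * (2:ℝ) ^ ς)]
end

section
/- Let f : ℕ → ℝ be an arithmetic function with f(1) = 1. Assume there exist A > 0 and c > 1 such that |f(n)| ≤ A c^n for all n ≥ 2, and let υ > 1 be the real number satisfying ζ(υ) = 1/(A c²) + 1, where ζ is the Riemann zeta function. Then for all n ≥ 2, the Dirichlet inverse satisfies |f⁻¹(n)| ≤ A c^n + (Ω(n) − 1) · A · n^υ · c^{n/2} / 2^υ. -/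
open Finset Real

lemma aux_ineq16 (A c υ x y ωd ωn : ℝ) (hA : 0 < A) (hc : 1 ≤ c) (hυ : 0 < υ)
    (hx : 2 ≤ x) (hy : 2 ≤ y) (hωd : 1 ≤ ωd) (hωdn : ωd ≤ ωn - 1) :
    (A * c ^ y) * (A * c ^ x + (ωd - 1) * A * x ^ υ * c ^ (x / 2) / 2 ^ υ)
      ≤ (ωn - 1) * ((A * c ^ (2:ℝ)) * A * ((x * y) / 2) ^ υ * c ^ ((x * y) / 2)) * y ^ (-υ) := by
  have hc0 : (0:ℝ) < c := lt_of_lt_of_le one_pos hc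
  have hx0 : (0:ℝ) < x := by linarith
  have hy0 : (0:ℝ) < y := by linarith
  have h1 : c ^ y * c ^ x ≤ c ^ (2:ℝ) * c ^ ((x * y) / 2) := by
    rw [← Real.rpow_add hc0, ← Real.rpow_add hc0]
    apply Real.rpow_le_rpow_of_exponent_le hc
    nlinarith [mul_nonneg (sub_nonneg.mpr hx) (sub_nonneg.mpr hy)]
  have h2 : c ^ y * c ^ (x / 2) ≤ c ^ (2:ℝ) * c ^ ((x * y) / 2) := by
    rw [← Real.rpow_add hc0, ← Real.rpow_add hc0]
    apply Real.rpow_le_rpow_of_exponent_le hc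
    nlinarith [mul_nonneg (sub_nonneg.mpr hx) (sub_nonneg.mpr hy)]
  have h3 : (x / 2) ^ υ = ((x * y) / 2) ^ υ * y ^ (-υ) := by
    rw [Real.rpow_neg hy0.le, ← div_eq_mul_inv, ← Real.div_rpow (by positivity) hy0.le]
    congr 1
    field_simp
  have h5 : x ^ υ / 2 ^ υ = (x / 2) ^ υ := (Real.div_rpow hx0.le (by norm_num) υ).symm
  have hP0 : (0:ℝ) < c ^ (2:ℝ) * c ^ ((x * y) / 2) := by positivity
  have hQ1 : (1:ℝ) ≤ (x / 2) ^ υ := Real.one_le_rpow (by linarith) hυ.le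
  calc (A * c ^ y) * (A * c ^ x + (ωd - 1) * A * x ^ υ * c ^ (x / 2) / 2 ^ υ)
      = A ^ 2 * (c ^ y * c ^ x) + (ωd - 1) * A ^ 2 * (c ^ y * c ^ (x / 2)) * (x ^ υ / 2 ^ υ) := by
        ring
    _ = A ^ 2 * (c ^ y * c ^ x) + (ωd - 1) * A ^ 2 * (c ^ y * c ^ (x / 2)) * (x / 2) ^ υ := by
        rw [h5]
    _ ≤ A ^ 2 * (c ^ (2:ℝ) * c ^ ((x * y) / 2) * (x / 2) ^ υ)
        + (ωd - 1) * A ^ 2 * (c ^ (2:ℝ) * c ^ ((x * y) / 2)) * (x / 2) ^ υ := by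
        apply add_le_add
        · apply mul_le_mul_of_nonneg_left _ (by positivity)
          calc c ^ y * c ^ x ≤ c ^ (2:ℝ) * c ^ ((x * y) / 2) := h1
            _ = c ^ (2:ℝ) * c ^ ((x * y) / 2) * 1 := (mul_one _).symm
            _ ≤ c ^ (2:ℝ) * c ^ ((x * y) / 2) * ((x / 2) ^ υ) :=
                mul_le_mul_of_nonneg_left hQ1 hP0.le
        · apply mul_le_mul_of_nonneg_right _ (by positivity)
          apply mul_le_mul_of_nonneg_left h2
          have : (0:ℝ) ≤ ωd - 1 := by linarith
          positivity
    _ = ωd * A ^ 2 * (c ^ (2:ℝ) * c ^ ((x * y) / 2)) * (x / 2) ^ υ := by ring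
    _ ≤ (ωn - 1) * A ^ 2 * (c ^ (2:ℝ) * c ^ ((x * y) / 2)) * (x / 2) ^ υ := by
        apply mul_le_mul_of_nonneg_right _ (by positivity)
        exact mul_le_mul_of_nonneg_right (mul_le_mul_of_nonneg_right hωdn (by positivity)) hP0.le
    _ = (ωn - 1) * ((A * c ^ (2:ℝ)) * A * ((x * y) / 2) ^ υ * c ^ ((x * y) / 2)) * y ^ (-υ) := by
        rw [h3]; ring

theorem stmt16 (f g : ℕ → ℝ) (hf1 : f 1 = 1)
    (hginv : ∀ n : ℕ, 0 < n →
      ∑ d ∈ n.divisors, f (n / d) * g d = if n = 1 then 1 else 0)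
    (A c : ℝ) (hA : 0 < A) (hc : 1 < c)
    (hf : ∀ n : ℕ, 2 ≤ n → |f n| ≤ A * c ^ n)
    (υ : ℝ) (hυ : 1 < υ)
    (hzeta : ∑' m : ℕ, (m : ℝ) ^ (-υ) = 1 / (A * c ^ 2) + 1) :
    ∀ n : ℕ, 2 ≤ n →
      |g n| ≤ A * c ^ n +
        ((n.primeFactorsList.length : ℝ) - 1) * A * (n : ℝ) ^ υ *
          c ^ ((n : ℝ) / 2) / (2 : ℝ) ^ υ := by
  have hc0 : (0:ℝ) < c := lt_trans one_pos hc
  have hυ0 : (0:ℝ) < υ := lt_trans one_pos hυ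
  have hAc2 : (0:ℝ) < A * c ^ 2 := by positivity
  have hsum : Summable (fun m : ℕ => (m : ℝ) ^ (-υ)) :=
    Real.summable_nat_rpow.mpr (by linarith)
  have htail : ∀ S : Finset ℕ, 1 ∉ S → ∑ e ∈ S, ((e : ℕ) : ℝ) ^ (-υ) ≤ 1 / (A * c ^ 2) := by
    intro S h1S
    have h2 : ∑ e ∈ insert 1 S, ((e : ℕ) : ℝ) ^ (-υ) ≤ ∑' m : ℕ, (m : ℝ) ^ (-υ) :=
      Summable.sum_le_tsum _ (fun i _ => Real.rpow_nonneg (Nat.cast_nonneg i) _) hsum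
    rw [Finset.sum_insert h1S, hzeta, Nat.cast_one, Real.one_rpow] at h2
    linarith
  have hg1 : g 1 = 1 := by
    have h := hginv 1 one_pos
    simpa [Nat.divisors_one, hf1] using h
  intro n
  induction n using Nat.strong_induction_on with
  | _ n ih =>
  intro hn
  have hn0 : 0 < n := by omega
  have hmem : n ∈ n.divisors := Nat.mem_divisors_self n (by omega)
  have hrec : g n = -∑ d ∈ n.divisors.erase n, f (n / d) * g d := by
    have h := hginv n hn0
    rw [if_neg (by omega), ← Finset.add_sum_erase _ _ hmem, Nat.div_self hn0, hf1, one_mul] at h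
    linarith
  have h1mem : 1 ∈ n.divisors.erase n := by
    rw [Finset.mem_erase, Nat.mem_divisors]
    exact ⟨by omega, one_dvd n, by omega⟩
  have hΩn1 : (1:ℝ) ≤ (n.primeFactorsList.length : ℝ) := by
    have h : n.primeFactorsList ≠ [] := by
      rw [Ne, Nat.primeFactorsList_eq_nil]; omega
    have := List.length_pos_iff.mpr h
    exact_mod_cast this
  set Ωn : ℝ := (n.primeFactorsList.length : ℝ) with hΩn
  set M : ℝ := (A * c ^ (2:ℝ)) * A * (((n:ℝ)) / 2) ^ υ * c ^ ((n:ℝ) / 2) with hM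
  have hM0 : 0 ≤ M := by positivity
  set D := (n.divisors.erase n).erase 1 with hD
  have habs : |g n| ≤ |f (n / 1) * g 1| + ∑ d ∈ D, |f (n / d) * g d| := by
    rw [hrec, abs_neg]
    calc |∑ d ∈ n.divisors.erase n, f (n / d) * g d|
        ≤ ∑ d ∈ n.divisors.erase n, |f (n / d) * g d| := Finset.abs_sum_le_sum_abs _ _
      _ = |f (n / 1) * g 1| + ∑ d ∈ D, |f (n / d) * g d| :=
          (Finset.add_sum_erase _ _ h1mem).symm
  have hfn : |f (n / 1) * g 1| ≤ A * c ^ n := by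
    rw [Nat.div_one, hg1, mul_one]; exact hf n hn
  -- termwise bound
  have hterm : ∀ d ∈ D, |f (n / d) * g d| ≤ (Ωn - 1) * M * ((n / d : ℕ) : ℝ) ^ (-υ) := by
    intro d hdD
    rw [hD, Finset.mem_erase, Finset.mem_erase, Nat.mem_divisors] at hdD
    obtain ⟨hd1, hdn, hdvd, -⟩ := hdD
    have hd0 : 0 < d := Nat.pos_of_dvd_of_pos hdvd hn0
    have hd2 : 2 ≤ d := by omega
    have hed : d * (n / d) = n := Nat.mul_div_cancel' hdvd
    set e := n / d with he
    have he2 : 2 ≤ e := by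
      by_contra h
      push_neg at h
      interval_cases e <;> omega
    have hdlt : d < n := lt_of_le_of_ne (Nat.le_of_dvd hn0 hdvd) hdn
    -- Omega additivity
    have hΩadd : d.primeFactorsList.length + e.primeFactorsList.length
        = n.primeFactorsList.length := by
      conv_rhs => rw [← hed]
      rw [(Nat.perm_primeFactorsList_mul (by omega) (by omega)).length_eq,
        List.length_append]
    have hΩe1 : 1 ≤ e.primeFactorsList.length := by
      have h : e.primeFactorsList ≠ [] := by
        rw [Ne, Nat.primeFactorsList_eq_nil]; omega
      exact List.length_pos_iff.mpr h
    have hΩd1 : 1 ≤ d.primeFactorsList.length := by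
      have h : d.primeFactorsList ≠ [] := by
        rw [Ne, Nat.primeFactorsList_eq_nil]; omega
      exact List.length_pos_iff.mpr h
    have hωdn : (d.primeFactorsList.length : ℝ) ≤ Ωn - 1 := by
      rw [hΩn]
      have : d.primeFactorsList.length + 1 ≤ n.primeFactorsList.length := by omega
      have := (Nat.cast_le (α := ℝ)).mpr this
      push_cast at this
      linarith
    have hgd := ih d hdlt hd2
    have hfe := hf e he2
    have hxy : (d : ℝ) * (e : ℝ) = (n : ℝ) := by exact_mod_cast hed
    have step1 : |f e * g d| ≤ (A * c ^ ((e:ℕ):ℝ)) * (A * c ^ ((d:ℕ):ℝ)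
        + ((d.primeFactorsList.length : ℝ) - 1) * A * (d : ℝ) ^ υ * c ^ ((d : ℝ) / 2) / 2 ^ υ) := by
      rw [abs_mul, Real.rpow_natCast, Real.rpow_natCast]
      apply mul_le_mul hfe hgd (abs_nonneg _)
      exact le_trans (abs_nonneg _) hfe
    calc |f (n / d) * g d| = |f e * g d| := by rw [he]
      _ ≤ _ := step1
      _ ≤ (Ωn - 1) * ((A * c ^ (2:ℝ)) * A * (((d:ℝ) * (e:ℝ)) / 2) ^ υ
            * c ^ (((d:ℝ) * (e:ℝ)) / 2)) * ((e:ℝ)) ^ (-υ) := by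
          apply aux_ineq16 A c υ _ _ _ _ hA hc.le hυ0 _ _ _ hωdn
          · exact_mod_cast hd2
          · exact_mod_cast he2
          · exact_mod_cast hΩd1
      _ = (Ωn - 1) * M * ((n / d : ℕ) : ℝ) ^ (-υ) := by
          rw [hxy, hM, ← he]
  -- sum bound
  have hsum1 : ∑ d ∈ D, |f (n / d) * g d|
      ≤ (Ωn - 1) * M * ∑ d ∈ D, ((n / d : ℕ) : ℝ) ^ (-υ) := by
    rw [Finset.mul_sum]
    exact Finset.sum_le_sum hterm
  have hsub : ∑ d ∈ D, ((n / d : ℕ) : ℝ) ^ (-υ)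
      ≤ ∑ d ∈ n.divisors.erase n, ((n / d : ℕ) : ℝ) ^ (-υ) := by
    apply Finset.sum_le_sum_of_subset_of_nonneg (Finset.erase_subset _ _)
    intro i _ _
    positivity
  have hre : ∑ d ∈ n.divisors.erase n, ((n / d : ℕ) : ℝ) ^ (-υ)
      = ∑ d ∈ n.divisors.erase 1, ((d : ℕ) : ℝ) ^ (-υ) := by
    have h1 := Nat.sum_div_divisors n (fun d => ((d : ℕ) : ℝ) ^ (-υ))
    have h2 : 1 ∈ n.divisors := Nat.one_mem_divisors.mpr (by omega)
    rw [← Finset.add_sum_erase _ (fun d => ((n / d : ℕ) : ℝ) ^ (-υ)) hmem,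
      ← Finset.add_sum_erase _ (fun d => ((d : ℕ) : ℝ) ^ (-υ)) h2, Nat.div_self hn0] at h1
    exact add_left_cancel h1
  have htail1 := htail (n.divisors.erase 1) (Finset.notMem_erase _ _)
  have hΩM : 0 ≤ (Ωn - 1) * M := mul_nonneg (by linarith) hM0
  have hfinal : ∑ d ∈ D, |f (n / d) * g d| ≤ (Ωn - 1) * M * (1 / (A * c ^ 2)) := by
    apply le_trans hsum1
    apply mul_le_mul_of_nonneg_left _ hΩM
    rw [hre] at hsub
    exact le_trans hsub htail1
  have hMval : (Ωn - 1) * M * (1 / (A * c ^ 2))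
      = (Ωn - 1) * A * (n : ℝ) ^ υ * c ^ ((n : ℝ) / 2) / (2 : ℝ) ^ υ := by
    have hc2 : c ^ (2:ℝ) = c ^ (2:ℕ) := by
      rw [← Real.rpow_natCast c 2]; norm_num
    have hdiv : ((n:ℝ) / 2) ^ υ = (n : ℝ) ^ υ / (2:ℝ) ^ υ :=
      Real.div_rpow (Nat.cast_nonneg n) (by norm_num) υ
    rw [hM, hc2, hdiv]
    have h2υ : (0:ℝ) < (2:ℝ) ^ υ := by positivity
    field_simp
  calc |g n| ≤ |f (n / 1) * g 1| + ∑ d ∈ D, |f (n / d) * g d| := habs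
    _ ≤ A * c ^ n + (Ωn - 1) * M * (1 / (A * c ^ 2)) := add_le_add hfn hfinal
    _ = A * c ^ n + (Ωn - 1) * A * (n : ℝ) ^ υ * c ^ ((n : ℝ) / 2) / (2 : ℝ) ^ υ := by
        rw [hMval]
end

section
/- Let f : ℕ → ℝ be an arithmetic function with f(1) = 1. Assume there exist an integer N ≥ 2, C > 0, and γ ∈ ℝ such that f(n) = 0 for all 2 ≤ n ≤ N and |f(n)| ≤ C n^γ for all n > N. Let ς > 1 be the real number satisfying ζ(ς) = 1/C + ∑_{m=1}^{N} m^{-ς}, where ζ is the Riemann zeta function. Then for all n > N, the Dirichlet inverse satisfies |f⁻¹(n)| ≤ n^{γ+ς}. -/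
set_option maxHeartbeats 1000000

theorem stmt17 (f g : ℕ → ℝ) (hf1 : f 1 = 1)
    (hginv : ∀ n : ℕ, 0 < n →
      ∑ d ∈ n.divisors, f (n / d) * g d = if n = 1 then 1 else 0)
    (N : ℕ) (hN : 2 ≤ N) (C : ℝ) (hC : 0 < C) (γ : ℝ)
    (hfzero : ∀ n : ℕ, 2 ≤ n → n ≤ N → f n = 0)
    (hf : ∀ n : ℕ, N < n → |f n| ≤ C * (n : ℝ) ^ γ)
    (ς : ℝ) (hς : 1 < ς)
    (hzeta : ∑' m : ℕ, (m : ℝ) ^ (-ς) =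
      1 / C + ∑ m ∈ Finset.Icc 1 N, (m : ℝ) ^ (-ς)) :
    ∀ n : ℕ, N < n → |g n| ≤ (n : ℝ) ^ (γ + ς) := by
  -- g 1 = 1
  have hg1 : g 1 = 1 := by
    have h := hginv 1 one_pos
    simpa [hf1] using h
  -- recursion
  have key : ∀ n : ℕ, 2 ≤ n →
      g n = -∑ d ∈ n.divisors.erase n, f (n / d) * g d := by
    intro n hn
    have h0 := hginv n (by omega)
    rw [if_neg (by omega)] at h0
    have hmem : n ∈ n.divisors := Nat.mem_divisors_self n (by omega)
    rw [← Finset.add_sum_erase _ _ hmem] at h0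
    rw [Nat.div_self (by omega), hf1, one_mul] at h0
    linarith
  -- g vanishes on [2, N]
  have hg0 : ∀ n : ℕ, 2 ≤ n → n ≤ N → g n = 0 := by
    intro n
    induction n using Nat.strong_induction_on with
    | _ n ih =>
      intro h2 hNn
      rw [key n h2, Finset.sum_eq_zero, neg_zero]
      intro d hd
      obtain ⟨hdn, hdvd⟩ := Finset.mem_erase.mp hd
      obtain ⟨hdvd', hn0⟩ := Nat.mem_divisors.mp hdvd
      have hdlt : d < n := lt_of_le_of_ne (Nat.le_of_dvd (by omega) hdvd') hdn
      have hdpos : 0 < d := Nat.pos_of_dvd_of_pos hdvd' (by omega)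
      rcases eq_or_lt_of_le (Nat.succ_le_of_lt hdpos) with h1 | h2d
      · -- d = 1
        have : d = 1 := h1.symm
        subst this
        rw [Nat.div_one, hfzero n h2 hNn, zero_mul]
      · rw [ih d hdlt h2d (by omega), mul_zero]
  -- summability of the zeta series
  have hsumm : Summable (fun m : ℕ => (m : ℝ) ^ (-ς)) := by
    rw [Real.summable_nat_rpow]; linarith
  -- the tail equals 1/C
  have hrange : ∑ m ∈ Finset.range (N + 1), (m : ℝ) ^ (-ς)
      = ∑ m ∈ Finset.Icc 1 N, (m : ℝ) ^ (-ς) := by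
    have hset : Finset.range (N + 1) = insert 0 (Finset.Icc 1 N) := by
      ext x; simp only [Finset.mem_range, Finset.mem_insert, Finset.mem_Icc]; omega
    rw [hset, Finset.sum_insert (by simp)]
    rw [Nat.cast_zero, Real.zero_rpow (neg_ne_zero.mpr (by linarith)), zero_add]
  have htail : ∑' m : ℕ, ((m + (N + 1) : ℕ) : ℝ) ^ (-ς) = 1 / C := by
    have h := Summable.sum_add_tsum_nat_add (N + 1) hsumm
    rw [hrange, hzeta] at h
    linarith
  -- finite sums of e^{-ς} over sets of naturals > N are ≤ 1/C
  have hfin : ∀ S : Finset ℕ, (∀ e ∈ S, N < e) →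
      ∑ e ∈ S, (e : ℝ) ^ (-ς) ≤ 1 / C := by
    intro S hS
    have hinj : ∀ x ∈ S, ∀ y ∈ S, x - (N + 1) = y - (N + 1) → x = y := by
      intro x hx y hy h
      have := hS x hx; have := hS y hy; omega
    have himg : ∑ m ∈ S.image (· - (N + 1)), ((m + (N + 1) : ℕ) : ℝ) ^ (-ς)
        = ∑ e ∈ S, (e : ℝ) ^ (-ς) := by
      rw [Finset.sum_image hinj]
      apply Finset.sum_congr rfl
      intro e he
      have := hS e he
      congr 2
      omega
    rw [← himg, ← htail]
    apply Summable.sum_le_tsum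
    · intro m _
      positivity
    · exact (summable_nat_add_iff (N + 1)).mpr hsumm
  -- main induction
  intro n
  induction n using Nat.strong_induction_on with
  | _ n ih =>
    intro hNn
    have hn2 : 2 ≤ n := by omega
    have hn0 : n ≠ 0 := by omega
    have hnpos : (0 : ℝ) < (n : ℝ) := by positivity
    rw [key n hn2, abs_neg]
    calc |∑ d ∈ n.divisors.erase n, f (n / d) * g d|
        ≤ ∑ d ∈ n.divisors.erase n, |f (n / d) * g d| :=
          Finset.abs_sum_le_sum_abs _ _
      _ ≤ ∑ d ∈ n.divisors.erase n,
            (if N < n / d then C * (n : ℝ) ^ (γ + ς) * ((n / d : ℕ) : ℝ) ^ (-ς) else 0) := by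
          apply Finset.sum_le_sum
          intro d hd
          obtain ⟨hdn, hdvd⟩ := Finset.mem_erase.mp hd
          obtain ⟨hdvd', _⟩ := Nat.mem_divisors.mp hdvd
          have hdlt : d < n := lt_of_le_of_ne (Nat.le_of_dvd (by omega) hdvd') hdn
          have hdpos : 0 < d := Nat.pos_of_dvd_of_pos hdvd' (by omega)
          have hqdvd : (n / d) ∣ n := Nat.div_dvd_of_dvd hdvd'
          have hq2 : 2 ≤ n / d := by
            have h1 : n / d ≠ 1 := by
              intro h
              have := Nat.div_mul_cancel hdvd'
              rw [h, one_mul] at this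
              omega
            have hqpos : 0 < n / d := Nat.div_pos (Nat.le_of_dvd (by omega) hdvd') hdpos
            omega
          have hmul : (n / d) * d = n := Nat.div_mul_cancel hdvd'
          have hqcast : ((n / d : ℕ) : ℝ) * (d : ℝ) = (n : ℝ) := by
            exact_mod_cast congrArg (Nat.cast : ℕ → ℝ) hmul
          have hqpos' : (0 : ℝ) < ((n / d : ℕ) : ℝ) := by positivity
          have hdpos' : (0 : ℝ) < (d : ℝ) := by positivity
          by_cases hq : N < n / d
          · rw [if_pos hq]
            rcases eq_or_lt_of_le (Nat.succ_le_of_lt hdpos) with h1 | h2d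
            · -- d = 1
              have hd1 : d = 1 := h1.symm
              subst hd1
              rw [Nat.div_one, hg1, mul_one]
              have hb : C * (n : ℝ) ^ (γ + ς) * (n : ℝ) ^ (-ς)
                  = C * (n : ℝ) ^ γ := by
                rw [Real.rpow_add hnpos, Real.rpow_neg (le_of_lt hnpos)]
                field_simp
              rw [hb]
              exact hf n hNn
            · rcases le_or_gt d N with hdN | hdN
              · rw [hg0 d h2d hdN, mul_zero, abs_zero]
                positivity
              · -- d > N
                have h1 : |f (n / d)| ≤ C * ((n / d : ℕ) : ℝ) ^ γ := hf _ hq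
                have h2 : |g d| ≤ (d : ℝ) ^ (γ + ς) := ih d hdlt hdN
                calc |f (n / d) * g d| = |f (n / d)| * |g d| := abs_mul _ _
                  _ ≤ (C * ((n / d : ℕ) : ℝ) ^ γ) * (d : ℝ) ^ (γ + ς) := by
                      apply mul_le_mul h1 h2 (abs_nonneg _)
                      positivity
                  _ = C * (n : ℝ) ^ (γ + ς) * ((n / d : ℕ) : ℝ) ^ (-ς) := by
                      rw [← hqcast]
                      rw [Real.mul_rpow (le_of_lt hqpos') (le_of_lt hdpos')]
                      rw [Real.rpow_add hqpos', Real.rpow_neg (le_of_lt hqpos')]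
                      field_simp
          · rw [if_neg hq]
            push_neg at hq
            rw [hfzero (n / d) hq2 hq, zero_mul, abs_zero]
      _ = ∑ d ∈ (n.divisors.erase n).filter (fun d => N < n / d),
            C * (n : ℝ) ^ (γ + ς) * ((n / d : ℕ) : ℝ) ^ (-ς) := by
          rw [Finset.sum_filter]
      _ = C * (n : ℝ) ^ (γ + ς) *
            ∑ d ∈ (n.divisors.erase n).filter (fun d => N < n / d),
              ((n / d : ℕ) : ℝ) ^ (-ς) := by
          rw [Finset.mul_sum]
      _ ≤ C * (n : ℝ) ^ (γ + ς) * (1 / C) := by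
          apply mul_le_mul_of_nonneg_left _ (by positivity)
          have hinj : ∀ x ∈ (n.divisors.erase n).filter (fun d => N < n / d),
              ∀ y ∈ (n.divisors.erase n).filter (fun d => N < n / d),
              n / x = n / y → x = y := by
            intro x hx y hy h
            obtain ⟨hx', _⟩ := Finset.mem_filter.mp hx
            obtain ⟨hy', _⟩ := Finset.mem_filter.mp hy
            have hxd : x ∣ n := (Nat.mem_divisors.mp (Finset.mem_of_mem_erase hx')).1
            have hyd : y ∣ n := (Nat.mem_divisors.mp (Finset.mem_of_mem_erase hy')).1
            have := Nat.div_div_self hxd hn0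
            have := Nat.div_div_self hyd hn0
            calc x = n / (n / x) := (Nat.div_div_self hxd hn0).symm
              _ = n / (n / y) := by rw [h]
              _ = y := Nat.div_div_self hyd hn0
          have himg : ∑ d ∈ (n.divisors.erase n).filter (fun d => N < n / d),
              ((n / d : ℕ) : ℝ) ^ (-ς)
              = ∑ e ∈ ((n.divisors.erase n).filter (fun d => N < n / d)).image (n / ·),
                  (e : ℝ) ^ (-ς) := by
            rw [Finset.sum_image hinj]
          rw [himg]
          apply hfin
          intro e he
          obtain ⟨d, hd, rfl⟩ := Finset.mem_image.mp he
          exact (Finset.mem_filter.mp hd).2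
      _ = (n : ℝ) ^ (γ + ς) := by
          field_simp
end
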